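/- arXiv:math/0205044 — 4 statements merged into one kernel-verified Lean document; each statement's English description precedes it below -/
import Mathlib

section
/- Let f be a C^1 random dynamical system on T^d over (Ω, F, P, T), let μ be an f-invariant ergodic measure of full support on Ω × T^d, and suppose f has τ-polynomial growth of the derivative with limit function g = lim n^{-τ} Df^n. Then for μ-a.e. (ω, x) ∈ Ω × T^d and every integer n: g(ω, x) ≠ 0, g(ω, x)^2 = 0, and g(ω, x) = g(T^n ω, f^n_ω x) · Df^n_ω(x). Moreover, for μ ⊗ μ-a.e. (ω, x, υ, y) ∈ (Ω × T^d)^2: g(ω, x) · g(υ, y) = 0 and g(ω, x) = Df_υ(y) · g(ω, x). -/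
open MeasureTheory Filter Topology Matrix

noncomputable section

/-- The circle `ℝ/ℤ`. -/
abbrev 𝕋 : Type := AddCircle (1 : ℝ)

/-- Projection of `ℝ^d` onto the torus `𝕋^d`. -/
def Tproj {d : ℕ} (x : Fin d → ℝ) : Fin d → 𝕋 := fun i => (x i : 𝕋)

/-- The `d×d` matrix of partial derivatives of a map `F : ℝ^d → ℝ^d` at a point. -/
def Dmat {d : ℕ} (F : (Fin d → ℝ) → (Fin d → ℝ)) (x : Fin d → ℝ) :
    Matrix (Fin d) (Fin d) ℝ :=
  Matrix.of fun i j => fderiv ℝ (fun y => F y i) x (Pi.single j 1)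

def nrm (M : Matrix (Fin d) (Fin d) ℝ) : ℝ := ∑ i, ∑ j, |M i j|

lemma nrm_nonneg (M : Matrix (Fin d) (Fin d) ℝ) : 0 ≤ nrm M := by
  apply Finset.sum_nonneg; intros; apply Finset.sum_nonneg; intros; positivity

lemma entry_le_nrm (M : Matrix (Fin d) (Fin d) ℝ) (i j : Fin d) : |M i j| ≤ nrm M := by
  unfold nrm
  calc |M i j| ≤ ∑ j', |M i j'| := Finset.single_le_sum (f := fun j' => |M i j'|)
        (fun _ _ => abs_nonneg _) (Finset.mem_univ j)
  _ ≤ ∑ i', ∑ j', |M i' j'| := Finset.single_le_sum (f := fun i' => ∑ j', |M i' j'|)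
        (fun _ _ => Finset.sum_nonneg fun _ _ => abs_nonneg _) (Finset.mem_univ i)

lemma nrm_eq_zero {M : Matrix (Fin d) (Fin d) ℝ} (h : nrm M = 0) : M = 0 := by
  ext i j
  have := entry_le_nrm M i j
  rw [h] at this
  simpa using le_antisymm this (abs_nonneg _)

lemma nrm_add_le (A B : Matrix (Fin d) (Fin d) ℝ) : nrm (A + B) ≤ nrm A + nrm B := by
  unfold nrm
  rw [← Finset.sum_add_distrib]
  apply Finset.sum_le_sum; intro i _
  rw [← Finset.sum_add_distrib]
  apply Finset.sum_le_sum; intro j _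
  exact abs_add_le _ _

lemma nrm_mul_le (A B : Matrix (Fin d) (Fin d) ℝ) : nrm (A * B) ≤ nrm A * nrm B := by
  unfold nrm
  calc ∑ i, ∑ j, |(A * B) i j| ≤ ∑ i, ∑ j, ∑ k, |A i k| * |B k j| := by
        apply Finset.sum_le_sum; intro i _
        apply Finset.sum_le_sum; intro j _
        rw [Matrix.mul_apply]
        refine (Finset.abs_sum_le_sum_abs _ _).trans ?_
        apply Finset.sum_le_sum; intro k _
        rw [abs_mul]
  _ = ∑ i, ∑ k, |A i k| * ∑ j, |B k j| := by
        apply Finset.sum_congr rfl; intro i _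
        rw [Finset.sum_comm]
        apply Finset.sum_congr rfl; intro k _
        rw [Finset.mul_sum]
  _ ≤ ∑ i, ∑ k, |A i k| * nrm B := by
        apply Finset.sum_le_sum; intro i _
        apply Finset.sum_le_sum; intro k _
        apply mul_le_mul_of_nonneg_left _ (abs_nonneg _)
        exact Finset.single_le_sum (f := fun k' => ∑ j', |B k' j'|)
          (fun _ _ => Finset.sum_nonneg fun _ _ => abs_nonneg _) (Finset.mem_univ k)
  _ = nrm A * nrm B := by
        unfold nrm
        rw [Finset.sum_mul]
        apply Finset.sum_congr rfl; intro i _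
        rw [Finset.sum_mul]

lemma nrm_smul (c : ℝ) (A : Matrix (Fin d) (Fin d) ℝ) : nrm (c • A) = |c| * nrm A := by
  unfold nrm
  simp [abs_mul, Finset.mul_sum]

lemma nrm_sub_le (A B C : Matrix (Fin d) (Fin d) ℝ) :
    nrm (A - C) ≤ nrm (A - B) + nrm (B - C) := by
  have : A - C = (A - B) + (B - C) := by abel
  rw [this]; exact nrm_add_le _ _

lemma mt_iff {ι : Type*} {l : Filter ι} {X : ι → Matrix (Fin d) (Fin d) ℝ}
    {L : Matrix (Fin d) (Fin d) ℝ} :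
    Tendsto X l (𝓝 L) ↔ ∀ i j, Tendsto (fun t => X t i j) l (𝓝 (L i j)) :=
  tendsto_pi_nhds.trans (forall_congr' fun _ => tendsto_pi_nhds)

lemma tend_mul_right {ι : Type*} {l : Filter ι} {X : ι → Matrix (Fin d) (Fin d) ℝ}
    {L : Matrix (Fin d) (Fin d) ℝ} (h : Tendsto X l (𝓝 L)) (C : Matrix (Fin d) (Fin d) ℝ) :
    Tendsto (fun t => X t * C) l (𝓝 (L * C)) := by
  rw [mt_iff] at h ⊢
  intro i j
  simp only [Matrix.mul_apply]
  exact tendsto_finset_sum _ fun k _ => (h i k).mul_const _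

lemma tend_mul_left {ι : Type*} {l : Filter ι} {X : ι → Matrix (Fin d) (Fin d) ℝ}
    {L : Matrix (Fin d) (Fin d) ℝ} (h : Tendsto X l (𝓝 L)) (C : Matrix (Fin d) (Fin d) ℝ) :
    Tendsto (fun t => C * X t) l (𝓝 (C * L)) := by
  rw [mt_iff] at h ⊢
  intro i j
  simp only [Matrix.mul_apply]
  exact tendsto_finset_sum _ fun k _ => (h k j).const_mul _

lemma tend_smul {ι : Type*} {l : Filter ι} {s : ι → ℝ} {a : ℝ}
    {X : ι → Matrix (Fin d) (Fin d) ℝ} {L : Matrix (Fin d) (Fin d) ℝ}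
    (hs : Tendsto s l (𝓝 a)) (hX : Tendsto X l (𝓝 L)) :
    Tendsto (fun t => s t • X t) l (𝓝 (a • L)) := by
  rw [mt_iff] at hX ⊢
  intro i j
  simp only [Matrix.smul_apply, smul_eq_mul]
  exact hs.mul (hX i j)

lemma mlim_unique {ι : Type*} {l : Filter ι} [l.NeBot] {X : ι → Matrix (Fin d) (Fin d) ℝ}
    {L L' : Matrix (Fin d) (Fin d) ℝ} (h1 : Tendsto X l (𝓝 L)) (h2 : Tendsto X l (𝓝 L')) :
    L = L' := by
  ext i j
  exact tendsto_nhds_unique ((mt_iff.1 h1) i j) ((mt_iff.1 h2) i j)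

lemma int_eq_of_abs_lt {a b : ℝ} (ha : ∃ k : ℤ, a = k) (hb : ∃ k : ℤ, b = k)
    (h : |a - b| < 1) : a = b := by
  obtain ⟨k, rfl⟩ := ha
  obtain ⟨k', rfl⟩ := hb
  have : ((k - k' : ℤ) : ℝ) = k - k' := by push_cast; ring
  rw [← this] at h
  have h' : |k - k'| < 1 := by exact_mod_cast h
  rw [abs_lt] at h'
  norm_cast
  omega

lemma intConst {φ : (Fin d → ℝ) → ℝ} (hφ : Continuous φ) (h : ∀ x, ∃ k : ℤ, φ x = k)
    (x y : Fin d → ℝ) : φ x = φ y := by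
  have hlc : IsLocallyConstant φ := by
    rw [IsLocallyConstant.iff_eventually_eq]
    intro z
    have h1 : ∀ᶠ w in 𝓝 z, |φ w - φ z| < 1 := by
      have := hφ.tendsto z
      have hb : Metric.ball (φ z) 1 ∈ 𝓝 (φ z) := Metric.ball_mem_nhds _ one_pos
      filter_upwards [this hb] with w hw
      simpa [Real.dist_eq] using hw
    filter_upwards [h1] with w hw
    exact int_eq_of_abs_lt (h w) (h z) hw
  exact hlc.apply_eq_of_preconnectedSpace x y

lemma Dmat_eq_of_liftTproj {F₁ F₂ : (Fin d → ℝ) → (Fin d → ℝ)}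
    (h₁ : Continuous F₁) (h₂ : Continuous F₂)
    (h : ∀ x, Tproj (F₁ x) = Tproj (F₂ x)) : Dmat F₁ = Dmat F₂ := by
  have key : ∀ i, ∀ x, F₁ x i = F₂ x i + (F₁ 0 i - F₂ 0 i) := by
    intro i x
    have hc : ∀ z, ∃ k : ℤ, F₁ z i - F₂ z i = k := by
      intro z
      have := congrFun (h z) i
      have hmem : F₁ z i - F₂ z i ∈ AddSubgroup.zmultiples (1 : ℝ) := by
        rwa [Tproj, Tproj, QuotientAddGroup.eq_iff_sub_mem] at this
      obtain ⟨k, hk⟩ := AddSubgroup.mem_zmultiples_iff.mp hmem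
      exact ⟨k, by rw [← hk]; simp⟩
    have := intConst (by fun_prop) hc x 0
    linarith [this]
  funext x
  ext i j
  show fderiv ℝ (fun y => F₁ y i) x (Pi.single j 1) = fderiv ℝ (fun y => F₂ y i) x (Pi.single j 1)
  have : (fun y => F₁ y i) = fun y => F₂ y i + (F₁ 0 i - F₂ 0 i) := funext fun y => key i y
  rw [this, fderiv_add_const]

lemma fderiv_component {F : (Fin d → ℝ) → (Fin d → ℝ)} {x : Fin d → ℝ}
    (hF : DifferentiableAt ℝ F x) (i : Fin d) :
    fderiv ℝ (fun y => F y i) x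
      = (ContinuousLinearMap.proj (R := ℝ) (φ := fun _ : Fin d => ℝ) i).comp (fderiv ℝ F x) := by
  have : (fun y => F y i)
      = (ContinuousLinearMap.proj (R := ℝ) (φ := fun _ : Fin d => ℝ) i) ∘ F := rfl
  rw [this, fderiv_comp x (ContinuousLinearMap.differentiableAt _) hF,
    ContinuousLinearMap.fderiv]

lemma Dmat_comp {F G : (Fin d → ℝ) → (Fin d → ℝ)} (hF : ContDiff ℝ 1 F) (hG : ContDiff ℝ 1 G)
    (x : Fin d → ℝ) : Dmat (fun y => G (F y)) x = Dmat G (F x) * Dmat F x := by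
  have hFd : DifferentiableAt ℝ F x := (hF.differentiable one_ne_zero).differentiableAt
  have hGd : DifferentiableAt ℝ G (F x) := (hG.differentiable one_ne_zero).differentiableAt
  ext i j
  show fderiv ℝ (fun y => G (F y) i) x (Pi.single j 1) = _
  have hGi : DifferentiableAt ℝ (fun z => G z i) (F x) :=
    (ContinuousLinearMap.differentiableAt
      (ContinuousLinearMap.proj (R := ℝ) (φ := fun _ : Fin d => ℝ) i)).comp _ hGd
  have hcomp : (fun y => G (F y) i) = (fun z => G z i) ∘ F := rfl
  rw [hcomp, fderiv_comp x hGi hFd]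
  set v := fderiv ℝ F x (Pi.single j 1) with hv
  have hvk : ∀ k, v k = Dmat F x k j := by
    intro k
    have := fderiv_component hFd k
    show _ = fderiv ℝ (fun y => F y k) x (Pi.single j 1)
    rw [this]; rfl
  have hvsum : v = ∑ k, v k • (Pi.single k 1 : Fin d → ℝ) := by
    have he : ∀ k, v k • (Pi.single k 1 : Fin d → ℝ) = Pi.single k (v k) := by
      intro k; rw [← Pi.single_smul, smul_eq_mul, mul_one]
    simp_rw [he]
    rw [Finset.univ_sum_single]
  calc (fderiv ℝ (fun z => G z i) (F x)).comp (fderiv ℝ F x) (Pi.single j 1)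
      = fderiv ℝ (fun z => G z i) (F x) v := rfl
    _ = ∑ k, v k • fderiv ℝ (fun z => G z i) (F x) (Pi.single k 1) := by
        conv_lhs => rw [hvsum]
        rw [map_sum]
        exact Finset.sum_congr rfl fun k _ => (fderiv ℝ (fun z => G z i) (F x)).map_smul _ _
    _ = ∑ k, Dmat G (F x) i k * Dmat F x k j := by
        apply Finset.sum_congr rfl; intro k _
        rw [hvk k, smul_eq_mul, mul_comm]; rfl
    _ = (Dmat G (F x) * Dmat F x) i j := (Matrix.mul_apply).symm

instance : Fact ((0:ℝ) < 1) := ⟨one_pos⟩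

def rho (θ : 𝕋) : ℝ := (AddCircle.measurableEquivIoc 1 (-(1/2)) θ : ℝ)

lemma rho_mem (θ : 𝕋) : rho θ ∈ Set.Ioc (-(1/2) : ℝ) (-(1/2) + 1) :=
  (AddCircle.measurableEquivIoc 1 (-(1/2)) θ).2

lemma rho_coe (θ : 𝕋) : ((rho θ : ℝ) : 𝕋) = θ :=
  (AddCircle.equivIoc 1 (-(1/2))).symm_apply_apply θ

lemma rho_measurable : Measurable rho :=
  measurable_subtype_coe.comp (AddCircle.measurableEquivIoc 1 (-(1/2))).measurable

lemma coe_eq_coe_int {a b : ℝ} (h : (a : 𝕋) = (b : 𝕋)) : ∃ k : ℤ, a - b = k := by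
  rw [QuotientAddGroup.eq_iff_sub_mem] at h
  obtain ⟨k, hk⟩ := AddSubgroup.mem_zmultiples_iff.mp h
  exact ⟨k, by rw [← hk]; simp⟩

lemma rho_eq_self {r : ℝ} (hr : r ∈ Set.Ioc (-(1/2) : ℝ) (-(1/2) + 1)) : rho (r : 𝕋) = r := by
  have h : rho (r : 𝕋) = toIocMod one_pos (-(1/2)) r := rfl
  rw [h, toIocMod_eq_self]
  exact hr

lemma Dmat_translate_id {F : (Fin d → ℝ) → (Fin d → ℝ)} (hF : Continuous F)
    (h : ∀ x, Tproj (F x) = Tproj x) (x : Fin d → ℝ) : Dmat F x = 1 := by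
  have h1 : Dmat F = Dmat (id : (Fin d → ℝ) → (Fin d → ℝ)) :=
    Dmat_eq_of_liftTproj hF continuous_id (fun x => h x)
  rw [h1]
  ext i j
  have hpr : fderiv ℝ (fun y : Fin d → ℝ => y i) x
      = (ContinuousLinearMap.proj (R := ℝ) (φ := fun _ : Fin d => ℝ) i).comp
        (fderiv ℝ (id : (Fin d → ℝ) → (Fin d → ℝ)) x) :=
    fderiv_component differentiableAt_id i
  show fderiv ℝ (fun y : Fin d → ℝ => y i) x (Pi.single j 1) = (1 : Matrix (Fin d) (Fin d) ℝ) i j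
  rw [hpr, fderiv_id]
  simp only [ContinuousLinearMap.coe_comp', Function.comp_apply, ContinuousLinearMap.coe_id',
    id_eq, ContinuousLinearMap.proj_apply, Matrix.one_apply, Pi.single_apply]

lemma freq_shift {Q : ℕ → Prop} : (∃ᶠ n in atTop, Q (n + 1)) ↔ (∃ᶠ n in atTop, Q n) := by
  rw [frequently_atTop, frequently_atTop]
  constructor
  · intro h N
    obtain ⟨n, hn, hQ⟩ := h N
    exact ⟨n + 1, by omega, hQ⟩
  · intro h N
    obtain ⟨n, hn, hQ⟩ := h (N + 1)
    refine ⟨n - 1, by omega, ?_⟩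
    have : n - 1 + 1 = n := by omega
    rw [this]
    exact hQ

lemma ae_frequently_visits {α : Type*} [MeasurableSpace α] {μ : Measure α}
    [IsProbabilityMeasure μ] {S : α → α} (hS : Ergodic S μ) {E : Set α}
    (hE : MeasurableSet E) (hpos : 0 < μ E) : ∀ᵐ p ∂μ, ∃ᶠ n in atTop, S^[n] p ∈ E := by
  set I := {p | ∃ᶠ n in atTop, S^[n] p ∈ E} with hI
  have hImeas : MeasurableSet I := by
    have : I = ⋂ N, ⋃ n, ⋃ _h : N ≤ n, S^[n] ⁻¹' E := by
      ext p
      simp only [hI, Set.mem_setOf_eq, frequently_atTop, Set.mem_iInter, Set.mem_iUnion,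
        Set.mem_preimage, ge_iff_le, exists_prop]
    rw [this]
    exact MeasurableSet.iInter fun N => MeasurableSet.iUnion fun n => MeasurableSet.iUnion
      fun _ => hE.preimage (hS.toMeasurePreserving.measurable.iterate n)
  have hinv : S ⁻¹' I = I := by
    ext p
    simp only [Set.mem_preimage, hI, Set.mem_setOf_eq]
    have : ∀ n, S^[n] (S p) = S^[n + 1] p := fun n => (Function.iterate_succ_apply S n p).symm
    constructor
    · intro h
      exact freq_shift.mp (h.mono fun n hn => by rwa [this n] at hn)
    · intro h
      exact (freq_shift.mpr h).mono fun n hn => by rwa [this n]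
  rcases hS.toPreErgodic.ae_empty_or_univ hImeas hinv with h | h
  · exfalso
    have hIzero : μ I = 0 := by rwa [ae_eq_empty] at h
    have hEI : ∀ᵐ p ∂μ, p ∈ E → p ∈ I :=
      (hS.toMeasurePreserving.conservative.ae_mem_imp_frequently_image_mem
        hE.nullMeasurableSet)
    have : μ E ≤ μ I := by
      apply measure_mono_ae
      exact hEI
    rw [hIzero] at this
    exact absurd (le_antisymm this zero_le) (ne_of_gt hpos)
  · rw [ae_eq_univ] at h
    exact h

lemma exists_rat_matrix_near (X : Matrix (Fin d) (Fin d) ℝ) {ε : ℝ} (hε : 0 < ε) :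
    ∃ r : Fin d → Fin d → ℚ, nrm (X - Matrix.of fun i j => (r i j : ℝ)) ≤ ε := by
  have hε' : 0 < ε / (d * d + 1) := by positivity
  have h : ∀ i j : Fin d, ∃ q : ℚ, |X i j - q| < ε / (d * d + 1) := fun i j =>
    exists_rat_near (X i j) hε'
  choose r hr using h
  refine ⟨r, ?_⟩
  have : nrm (X - Matrix.of fun i j => (r i j : ℝ)) ≤ ∑ _i : Fin d, ∑ _j : Fin d, ε / (d*d+1) := by
    apply Finset.sum_le_sum; intro i _
    apply Finset.sum_le_sum; intro j _
    exact le_of_lt (hr i j)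
  refine this.trans ?_
  rw [Finset.sum_const, Finset.sum_const]
  simp only [Finset.card_univ, Fintype.card_fin, smul_eq_mul, nsmul_eq_mul]
  rw [← mul_assoc]
  have hd : (0:ℝ) < (d:ℝ)*(d:ℝ)+1 := by positivity
  calc (d:ℝ) * d * (ε/((d:ℝ)*(d:ℝ)+1)) ≤ ((d:ℝ)*(d:ℝ)+1) * (ε/((d:ℝ)*(d:ℝ)+1)) :=
        mul_le_mul_of_nonneg_right (by linarith) (le_of_lt hε')
  _ = ε := by field_simp

lemma nrm_neg (A : Matrix (Fin d) (Fin d) ℝ) : nrm (-A) = nrm A := by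
  unfold nrm; simp

lemma tendsto_nrm_sub_zero {ι : Type*} {l : Filter ι} {X : ι → Matrix (Fin d) (Fin d) ℝ}
    {L : Matrix (Fin d) (Fin d) ℝ} (h : Tendsto X l (𝓝 L)) :
    Tendsto (fun t => nrm (X t - L)) l (𝓝 0) := by
  rw [mt_iff] at h
  have : Tendsto (fun t => ∑ i : Fin d, ∑ j : Fin d, |X t i j - L i j|) l (𝓝 0) := by
    have h0 : (0:ℝ) = ∑ _i : Fin d, ∑ _j : Fin d, (0:ℝ) := by simp
    rw [h0]
    apply tendsto_finset_sum; intro i _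
    apply tendsto_finset_sum; intro j _
    have := ((h i j).sub_const (L i j)).abs
    simpa using this
  exact this

lemma shifted_rpow_conv {τ : ℝ} (hτ : 0 < τ) {u : ℕ → Matrix (Fin d) (Fin d) ℝ}
    {L : Matrix (Fin d) (Fin d) ℝ}
    (h : Tendsto (fun m : ℕ => ((m:ℝ)^τ)⁻¹ • u m) atTop (𝓝 L)) (w : ℕ → ℕ)
    (hw : Tendsto (fun m : ℕ => ((w m : ℝ)) / (m:ℝ)) atTop (𝓝 1))
    (hw2 : Tendsto w atTop atTop) :
    Tendsto (fun m : ℕ => ((m:ℝ)^τ)⁻¹ • u (w m)) atTop (𝓝 L) := by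
  have hcomp : Tendsto (fun m : ℕ => ((w m : ℝ)^τ)⁻¹ • u (w m)) atTop (𝓝 L) := h.comp hw2
  have hsc : Tendsto (fun m : ℕ => ((w m : ℝ) / (m:ℝ))^τ) atTop (𝓝 1) := by
    have := hw.rpow_const (p := τ) (Or.inr hτ.le)
    simpa using this
  have heq : ∀ᶠ m : ℕ in atTop, ((w m : ℝ)/(m:ℝ))^τ • (((w m : ℝ)^τ)⁻¹ • u (w m))
      = ((m:ℝ)^τ)⁻¹ • u (w m) := by
    have h1 : ∀ᶠ m : ℕ in atTop, 1 ≤ w m := hw2.eventually (eventually_ge_atTop 1)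
    have h2 : ∀ᶠ m : ℕ in atTop, 1 ≤ m := eventually_ge_atTop 1
    filter_upwards [h1, h2] with m hm1 hm2
    have hwpos : (0:ℝ) < (w m : ℝ) := by exact_mod_cast hm1
    have hmpos : (0:ℝ) < (m : ℝ) := by exact_mod_cast hm2
    rw [smul_smul]
    congr 1
    have hwτ : (0:ℝ) < (w m : ℝ)^τ := Real.rpow_pos_of_pos hwpos τ
    have hmτ : (0:ℝ) < (m : ℝ)^τ := Real.rpow_pos_of_pos hmpos τ
    rw [Real.div_rpow hwpos.le hmpos.le]
    field_simp
  have hfin := tend_smul hsc hcomp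
  rw [one_smul] at hfin
  exact Tendsto.congr' heq hfin


set_option maxHeartbeats 1000000 in
/-- Let `f` be a `C¹` random dynamical system on `𝕋^d` over an
ergodic automorphism `Te` of a Lebesgue probability space `(Ω,P)` (given by its
two-sided cocycle of iterates `f^n_ω`, `n ∈ ℤ`, with lifts `fiter n ω`), let `μ` be
an `f`-invariant ergodic measure of full support with marginal `P`, and suppose `f`
has `τ`-polynomial growth of the derivative with limit function `g`.  Then for
`μ`-a.e. `(ω,x)` and every `n ∈ ℤ`:  `g(ω,x) ≠ 0`, `g(ω,x)² = 0` and
`g(ω,x) = g(Teⁿω, f^n_ω x) · Df^n_ω(x)`; moreover for `μ ⊗ μ`-a.e. `(ω,x,υ,y)`: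
`g(ω,x)·g(υ,y) = 0` and `g(ω,x) = Df_υ(y)·g(ω,x)`. -/
theorem stmt_4
    {Ω : Type*} [MeasurableSpace Ω] [StandardBorelSpace Ω]
    (P : Measure Ω) [IsProbabilityMeasure P]
    (Te : Equiv.Perm Ω) (hTe : Ergodic (⇑Te) P)
    (hTesymm : MeasurePreserving (⇑Te.symm) P P)
    (d : ℕ)
    -- the two-sided C¹ RDS on 𝕋^d: lifts and induced torus maps of all iterates
    (fiter : ℤ → Ω → (Fin d → ℝ) → (Fin d → ℝ))
    (fiterT : ℤ → Ω → (Fin d → 𝕋) → (Fin d → 𝕋))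
    (hmeas : ∀ n : ℤ, Measurable fun q : Ω × (Fin d → 𝕋) => fiterT n q.1 q.2)
    (hC1 : ∀ (n : ℤ) ω, ContDiff ℝ 1 (fiter n ω))
    (hid : ∀ ω, fiterT 0 ω = id)
    (hcocycle : ∀ (m n : ℤ) ω (y : Fin d → 𝕋),
      fiterT (m + n) ω y = fiterT m ((Te ^ n) ω) (fiterT n ω y))
    (hlift : ∀ (n : ℤ) ω (x : Fin d → ℝ), fiterT n ω (Tproj x) = Tproj (fiter n ω x))
    -- μ: an f-invariant ergodic measure with marginal P and full support
    (μ : Measure (Ω × (Fin d → 𝕋))) [IsProbabilityMeasure μ]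
    (hmarg : μ.map Prod.fst = P)
    (herg : Ergodic (fun p : Ω × (Fin d → 𝕋) => (Te p.1, fiterT 1 p.1 p.2)) μ)
    (hfull : ∀ U : Set (Fin d → 𝕋), IsOpen U → U.Nonempty →
      ∀ A : Set Ω, MeasurableSet A → 0 < P A → 0 < μ (A ×ˢ U))
    -- τ-polynomial growth of the derivative, with limit function g
    (τ : ℝ) (hτ : 0 < τ)
    (Dn : ℤ → Ω → (Fin d → 𝕋) → Matrix (Fin d) (Fin d) ℝ)
    (hDn : ∀ (n : ℤ) ω (x : Fin d → ℝ), Dn n ω (Tproj x) = Dmat (fiter n ω) x)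
    (g : Ω × (Fin d → 𝕋) → Matrix (Fin d) (Fin d) ℝ)
    (hgmeas : ∀ i j, Measurable fun p => g p i j)
    (hconv : ∀ᵐ p ∂μ,
      Tendsto (fun n : ℕ => ((n : ℝ) ^ τ)⁻¹ • Dn (n : ℤ) p.1 p.2) atTop (𝓝 (g p)))
    (hgne : ∃ S : Set (Ω × (Fin d → 𝕋)), MeasurableSet S ∧ 0 < μ S ∧
      ∀ p ∈ S, g p ≠ 0) :
    (∀ᵐ p ∂μ, g p ≠ 0 ∧ g p * g p = 0 ∧
      ∀ n : ℤ, g p = g ((Te ^ n) p.1, fiterT n p.1 p.2) * Dn n p.1 p.2) ∧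
    (∀ᵐ q ∂(μ.prod μ),
      g q.1 * g q.2 = 0 ∧ g q.1 = Dn 1 q.2.1 q.2.2 * g q.1) := by
  classical
  -- the skew product and its iterates
  set Sn : ℤ → Ω × (Fin d → 𝕋) → Ω × (Fin d → 𝕋) :=
    fun n p => ((Te ^ n) p.1, fiterT n p.1 p.2) with hSndef
  have hSn1 : Sn 1 = fun p : Ω × (Fin d → 𝕋) => (Te p.1, fiterT 1 p.1 p.2) := by
    funext p; simp [hSndef]
  have hSnadd : ∀ (m n : ℤ) p, Sn m (Sn n p) = Sn (m + n) p := by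
    intro m n p
    simp only [hSndef]
    refine Prod.ext ?_ ?_
    · show (Te ^ m) ((Te ^ n) p.1) = (Te ^ (m + n)) p.1
      rw [_root_.zpow_add]
      rfl
    · exact (hcocycle m n p.1 p.2).symm
  have hSn0 : ∀ p, Sn 0 p = p := by
    intro p
    simp only [hSndef]
    refine Prod.ext ?_ ?_
    · show (Te ^ (0:ℤ)) p.1 = p.1
      rw [zpow_zero]; rfl
    · show fiterT 0 p.1 p.2 = p.2
      rw [hid]; rfl
  have hTepow_meas : ∀ n : ℤ, Measurable ⇑(Te ^ n) := by
    intro n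
    induction n using Int.induction_on with
    | zero => rw [zpow_zero]; exact measurable_id
    | succ k ih =>
        have : ⇑(Te ^ ((k:ℤ) + 1)) = ⇑(Te ^ (k:ℤ)) ∘ ⇑Te := by
          funext ω
          rw [_root_.zpow_add, zpow_one]
          rfl
        rw [this]
        exact ih.comp hTe.toMeasurePreserving.measurable
    | pred k ih =>
        have : ⇑(Te ^ (-(k:ℤ) - 1)) = ⇑(Te ^ (-(k:ℤ))) ∘ ⇑Te.symm := by
          funext ω
          rw [sub_eq_add_neg, _root_.zpow_add, _root_.zpow_neg_one]
          rfl
        rw [this]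
        exact ih.comp hTesymm.measurable
  have hSnmeas : ∀ n : ℤ, Measurable (Sn n) := fun n =>
    ((hTepow_meas n).comp measurable_fst).prodMk (hmeas n)
  have hS : MeasurePreserving (Sn 1) μ μ := by
    rw [hSn1]; exact herg.toMeasurePreserving
  have hSminv : MeasurePreserving (Sn (-1)) μ μ := by
    refine ⟨hSnmeas (-1), ?_⟩
    conv_lhs => rw [← hS.map_eq]
    rw [Measure.map_map (hSnmeas (-1)) (hSnmeas 1)]
    have hcmp : Sn (-1) ∘ Sn 1 = id := by
      funext p
      show Sn (-1) (Sn 1 p) = p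
      have h1 := hSnadd (-1) 1 p
      norm_num at h1
      rw [h1]
      exact hSn0 p
    rw [hcmp, Measure.map_id]
  have hSnmp : ∀ n : ℤ, MeasurePreserving (Sn n) μ μ := by
    intro n
    induction n using Int.induction_on with
    | zero => exact ⟨hSnmeas 0, by rw [show Sn 0 = id from funext hSn0, Measure.map_id]⟩
    | succ k ih =>
        have : Sn ((k:ℤ) + 1) = Sn 1 ∘ Sn (k:ℤ) := by
          funext p; show Sn (k+1) p = Sn 1 (Sn k p); rw [hSnadd, add_comm]
        rw [this]; exact hS.comp ih
    | pred k ih =>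
        have : Sn (-(k:ℤ) - 1) = Sn (-1) ∘ Sn (-(k:ℤ)) := by
          funext p; show Sn (-k-1) p = Sn (-1) (Sn (-k) p); rw [hSnadd]; ring_nf
        rw [this]; exact hSminv.comp ih
  have hiter : ∀ (k : ℕ) p, (Sn 1)^[k] p = Sn (k : ℤ) p := by
    intro k
    induction k with
    | zero => intro p; simp only [Function.iterate_zero, id_eq, Nat.cast_zero]; exact (hSn0 p).symm
    | succ k ih =>
        intro p
        rw [Function.iterate_succ_apply', ih p, hSnadd]
        congr 1
        push_cast
        ring
  -- surjectivity of Tproj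
  have hTsurj : ∀ χ : Fin d → 𝕋, ∃ x : Fin d → ℝ, Tproj x = χ := by
    intro χ
    exact ⟨fun i => rho (χ i), funext fun i => rho_coe _⟩
  -- cocycle for Dn
  have hDco : ∀ (m n : ℤ) (ω : Ω) (χ : Fin d → 𝕋),
      Dn (m + n) ω χ = Dn m ((Te ^ n) ω) (fiterT n ω χ) * Dn n ω χ := by
    intro m n ω χ
    obtain ⟨x, rfl⟩ := hTsurj χ
    rw [hDn, hlift, hDn, hDn]
    have hcomp := Dmat_comp (hC1 n ω) (hC1 m ((Te ^ n) ω)) x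
    rw [← hcomp]
    have heq : Dmat (fiter (m + n) ω) = Dmat (fun y => fiter m ((Te ^ n) ω) (fiter n ω y)) := by
      apply Dmat_eq_of_liftTproj (hC1 (m + n) ω).continuous
        ((hC1 m ((Te ^ n) ω)).continuous.comp (hC1 n ω).continuous)
      intro y
      calc Tproj (fiter (m + n) ω y) = fiterT (m + n) ω (Tproj y) := (hlift _ _ _).symm
        _ = fiterT m ((Te ^ n) ω) (fiterT n ω (Tproj y)) := hcocycle m n ω (Tproj y)
        _ = fiterT m ((Te ^ n) ω) (Tproj (fiter n ω y)) := by rw [hlift n ω y]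
        _ = Tproj (fiter m ((Te ^ n) ω) (fiter n ω y)) := hlift _ _ _
    rw [heq]
  have hD0 : ∀ (ω : Ω) (χ : Fin d → 𝕋), Dn 0 ω χ = 1 := by
    intro ω χ
    obtain ⟨x, rfl⟩ := hTsurj χ
    rw [hDn]
    apply Dmat_translate_id (hC1 0 ω).continuous
    intro y
    calc Tproj (fiter 0 ω y) = fiterT 0 ω (Tproj y) := (hlift _ _ _).symm
      _ = Tproj y := by rw [hid]; rfl
  have hDinv1 : ∀ (n : ℤ) (p : Ω × (Fin d → 𝕋)),
      Dn (-n) (Sn n p).1 (Sn n p).2 * Dn n p.1 p.2 = 1 := by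
    intro n p
    have h := hDco (-n) n p.1 p.2
    rw [neg_add_cancel, hD0] at h
    exact h.symm
  have hDinv2 : ∀ (n : ℤ) (p : Ω × (Fin d → 𝕋)),
      Dn n p.1 p.2 * Dn (-n) (Sn n p).1 (Sn n p).2 = 1 := by
    intro n p
    have h := hDco n (-n) (Sn n p).1 (Sn n p).2
    rw [add_neg_cancel, hD0] at h
    have hfst : (Te ^ (-n)) (Sn n p).1 = p.1 := by
      show (Te ^ (-n)) ((Te ^ n) p.1) = p.1
      rw [← Equiv.Perm.mul_apply, ← _root_.zpow_add, neg_add_cancel, zpow_zero]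
      rfl
    have hsnd : fiterT (-n) (Sn n p).1 (Sn n p).2 = p.2 := by
      show fiterT (-n) ((Te ^ n) p.1) (fiterT n p.1 p.2) = p.2
      rw [← hcocycle (-n) n p.1 p.2, neg_add_cancel, hid]
      rfl
    rw [hfst, hsnd] at h
    exact h.symm
  -- joint measurability of Dn entries
  have hDnentry : ∀ (n : ℤ) (i j : Fin d),
      Measurable fun q : Ω × (Fin d → 𝕋) => Dn n q.1 q.2 i j := by
    intro n i j
    set c : ℕ → ℝ := fun m => (m : ℝ) + 1 with hcdef
    have hcpos : ∀ m, 0 < c m := fun m => by positivity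
    set e : ℕ → Fin d → 𝕋 := fun m => Tproj ((c m)⁻¹ • (Pi.single j 1 : Fin d → ℝ)) with hedef
    set φ : ℕ → Ω × (Fin d → 𝕋) → ℝ :=
      fun m q => c m * rho ((fiterT n q.1 (q.2 + e m) - fiterT n q.1 q.2) i) with hφdef
    have hφmeas : ∀ m, Measurable (φ m) := by
      intro m
      apply Measurable.const_mul
      apply rho_measurable.comp
      have hadd : Measurable fun q : Ω × (Fin d → 𝕋) => q.2 + e m := by
        apply measurable_pi_lambda
        intro k
        have h1 : Measurable fun q : Ω × (Fin d → 𝕋) => q.2 k :=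
          (measurable_pi_apply k).comp measurable_snd
        have h2 : Continuous fun θ : 𝕋 => θ + e m k := by continuity
        exact (h2.measurable).comp h1
      have hX : Measurable fun q : Ω × (Fin d → 𝕋) => fiterT n q.1 (q.2 + e m) i :=
        (measurable_pi_apply i).comp ((hmeas n).comp (measurable_fst.prodMk hadd))
      have hY : Measurable fun q : Ω × (Fin d → 𝕋) => fiterT n q.1 q.2 i :=
        (measurable_pi_apply i).comp (hmeas n)
      have hsub : Continuous fun z : 𝕋 × 𝕋 => z.1 - z.2 := continuous_sub
      exact (hsub.measurable).comp (hX.prodMk hY)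
    apply measurable_of_tendsto_metrizable hφmeas
    rw [tendsto_pi_nhds]
    intro q
    obtain ⟨x, hx⟩ := hTsurj q.2
    set F := fiter n q.1 with hFdef
    have hFc : Continuous F := (hC1 n q.1).continuous
    have hdiff : DifferentiableAt ℝ F x := ((hC1 n q.1).differentiable one_ne_zero).differentiableAt
    have hnorm : Tendsto (fun m : ℕ => ‖c m‖) atTop atTop := by
      have h1 : Tendsto (fun m : ℕ => (m : ℝ) + 1) atTop atTop :=
        tendsto_atTop_add_const_right atTop 1 tendsto_natCast_atTop_atTop
      apply h1.congr
      intro m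
      rw [Real.norm_eq_abs, abs_of_pos (hcpos m)]
    have hlim := hdiff.hasFDerivAt.lim ((Pi.single j 1 : Fin d → ℝ)) (c := c) hnorm
    have hlimi : Tendsto (fun m : ℕ => c m * ((F (x + (c m)⁻¹ • (Pi.single j 1 : Fin d → ℝ)) - F x) i))
        atTop (𝓝 ((fderiv ℝ F x) ((Pi.single j 1 : Fin d → ℝ)) i)) := by
      have := (tendsto_pi_nhds.1 hlim) i
      apply this.congr
      intro m
      simp [Pi.smul_apply, smul_eq_mul]
    set Δ : ℕ → ℝ := fun m => (F (x + (c m)⁻¹ • (Pi.single j 1 : Fin d → ℝ)) - F x) i with hΔdef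
    have hcinv : Tendsto (fun m : ℕ => (c m)⁻¹) atTop (𝓝 0) := by
      have h1 : Tendsto (fun m : ℕ => (m : ℝ) + 1) atTop atTop :=
        tendsto_atTop_add_const_right atTop 1 tendsto_natCast_atTop_atTop
      exact h1.inv_tendsto_atTop
    have hΔi : Tendsto Δ atTop (𝓝 0) := by
      have h5 : Tendsto (fun m : ℕ => x + (c m)⁻¹ • (Pi.single j 1 : Fin d → ℝ)) atTop (𝓝 x) := by
        rw [tendsto_pi_nhds]
        intro k
        have hmc := hcinv.mul_const ((Pi.single j 1 : Fin d → ℝ) k)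
        rw [zero_mul] at hmc
        have hsum := (tendsto_const_nhds (x := x k)).add hmc
        rw [add_zero] at hsum
        apply hsum.congr
        intro m
        simp [Pi.smul_apply, smul_eq_mul]
      have h6 : Tendsto (fun m : ℕ => F (x + (c m)⁻¹ • (Pi.single j 1 : Fin d → ℝ)) i) atTop (𝓝 (F x i)) :=
        ((continuous_apply i).tendsto (F x)).comp ((hFc.tendsto x).comp h5)
      have := h6.sub (tendsto_const_nhds (x := F x i))
      simpa [hΔdef] using this
    have hev : ∀ᶠ m in atTop, φ m q = c m * Δ m := by
      have hsmall : ∀ᶠ m in atTop, |Δ m| < 1/2 := by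
        have := hΔi (Metric.ball_mem_nhds 0 (by norm_num : (0:ℝ) < 1/2))
        filter_upwards [this] with m hm
        simpa [Real.dist_eq] using hm
      filter_upwards [hsmall] with m hm
      have hval : (fiterT n q.1 (q.2 + e m) - fiterT n q.1 q.2) i = ((Δ m : ℝ) : 𝕋) := by
        have hq2 : q.2 + e m = Tproj (x + (c m)⁻¹ • (Pi.single j 1 : Fin d → ℝ)) := by
          rw [← hx, hedef]
          funext k
          show (Tproj x) k + (Tproj ((c m)⁻¹ • (Pi.single j 1 : Fin d → ℝ))) k = _
          simp only [Tproj]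
          rw [← AddCircle.coe_add]
          rfl
        rw [hq2, ← hx, hlift, hlift]
        show (Tproj (F (x + (c m)⁻¹ • (Pi.single j 1 : Fin d → ℝ)))) i - (Tproj (F x)) i = _
        simp only [Tproj]
        rw [← AddCircle.coe_sub]
        rfl
      show c m * rho ((fiterT n q.1 (q.2 + e m) - fiterT n q.1 q.2) i) = c m * Δ m
      rw [hval, rho_eq_self (Set.mem_Ioc.mpr
        ⟨by linarith [(abs_lt.1 hm).1], by linarith [(abs_lt.1 hm).2]⟩)]
    have htarget : Dn n q.1 q.2 i j = (fderiv ℝ F x) ((Pi.single j 1 : Fin d → ℝ)) i := by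
      rw [← hx, hDn]
      show fderiv ℝ (fun y => F y i) x (Pi.single j 1) = _
      rw [fderiv_component hdiff i]
      rfl
    rw [htarget]
    exact Tendsto.congr' (hev.mono fun m hm => hm.symm) (by simpa [hΔdef] using hlimi)
  -- a.e. convergence along shifted orbits
  have hconvSn : ∀ k : ℤ, ∀ᵐ p ∂μ,
      Tendsto (fun n : ℕ => ((n : ℝ) ^ τ)⁻¹ • Dn (n : ℤ) (Sn k p).1 (Sn k p).2) atTop
        (𝓝 (g (Sn k p))) := by
    intro k
    exact ae_of_ae_map (hSnmeas k).aemeasurable (by rwa [(hSnmp k).map_eq])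
  -- index-shifted convergence
  have hshift : ∀ (k : ℤ) (p : Ω × (Fin d → 𝕋)),
      Tendsto (fun n : ℕ => ((n : ℝ) ^ τ)⁻¹ • Dn (n : ℤ) p.1 p.2) atTop (𝓝 (g p)) →
      Tendsto (fun m : ℕ => ((m : ℝ) ^ τ)⁻¹ • Dn ((m : ℤ) + k) p.1 p.2) atTop (𝓝 (g p)) := by
    intro k p hp
    have hw2 : Tendsto (fun m : ℕ => ((m : ℤ) + k).toNat) atTop atTop := by
      apply tendsto_atTop_atTop.2
      intro b
      exact ⟨b + k.natAbs, fun m hm => by omega⟩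
    have hw : Tendsto (fun m : ℕ => ((((m : ℤ) + k).toNat : ℝ)) / (m : ℝ)) atTop (𝓝 1) := by
      have h0 : Tendsto (fun m : ℕ => 1 + (k : ℝ) / (m : ℝ)) atTop (𝓝 1) := by
        have := tendsto_const_div_atTop_nhds_zero_nat (k : ℝ)
        have h2 := this.const_add (1:ℝ)
        simpa using h2
      apply h0.congr'
      filter_upwards [eventually_ge_atTop (k.natAbs + 1)] with m hm
      have hmz : (0:ℝ) < (m:ℝ) := by
        have : 1 ≤ m := by omega
        exact_mod_cast Nat.lt_of_lt_of_le Nat.zero_lt_one this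
      have hcast : ((((m : ℤ) + k).toNat : ℤ) : ℝ) = (m : ℝ) + (k : ℝ) := by
        have : (((m : ℤ) + k).toNat : ℤ) = (m : ℤ) + k := by omega
        rw [this]; push_cast; ring
      have hcast' : ((((m : ℤ) + k).toNat : ℕ) : ℝ) = (m : ℝ) + (k : ℝ) := by
        exact_mod_cast hcast
      rw [hcast']
      field_simp
    have hmain := shifted_rpow_conv hτ hp (fun m => ((m : ℤ) + k).toNat) hw hw2
    apply hmain.congr'
    filter_upwards [eventually_ge_atTop (k.natAbs + 1)] with m hm
    have : ((((m : ℤ) + k).toNat : ℕ) : ℤ) = (m : ℤ) + k := by omega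
    rw [this]
  -- cocycle for g
  have hgco : ∀ᵐ p ∂μ, ∀ k : ℤ,
      g p = g (Sn k p) * Dn k p.1 p.2 ∧ g (Sn k p) = g p * Dn (-k) (Sn k p).1 (Sn k p).2 := by
    filter_upwards [hconv, ae_all_iff.2 hconvSn] with p h0 hk
    intro k
    have hk' := hk k
    have hC2 := hDinv2 k p
    have hC1' := hDinv1 k p
    have hseq : ∀ m : ℕ, Dn (m : ℤ) (Sn k p).1 (Sn k p).2
        = Dn ((m : ℤ) + k) p.1 p.2 * Dn (-k) (Sn k p).1 (Sn k p).2 := by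
      intro m
      have h := hDco (m : ℤ) k p.1 p.2
      have h' : Dn ((m : ℤ) + k) p.1 p.2
          = Dn (m : ℤ) (Sn k p).1 (Sn k p).2 * Dn k p.1 p.2 := h
      calc Dn (m : ℤ) (Sn k p).1 (Sn k p).2
          = Dn (m : ℤ) (Sn k p).1 (Sn k p).2
            * (Dn k p.1 p.2 * Dn (-k) (Sn k p).1 (Sn k p).2) := by rw [hC2, mul_one]
        _ = (Dn (m : ℤ) (Sn k p).1 (Sn k p).2 * Dn k p.1 p.2)
            * Dn (-k) (Sn k p).1 (Sn k p).2 := by rw [mul_assoc]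
        _ = Dn ((m : ℤ) + k) p.1 p.2 * Dn (-k) (Sn k p).1 (Sn k p).2 := by rw [← h']
    have h3 : Tendsto (fun m : ℕ => ((m : ℝ) ^ τ)⁻¹ • Dn (m : ℤ) (Sn k p).1 (Sn k p).2) atTop
        (𝓝 (g p * Dn (-k) (Sn k p).1 (Sn k p).2)) := by
      have h4 := tend_mul_right (hshift k p h0) (Dn (-k) (Sn k p).1 (Sn k p).2)
      apply h4.congr
      intro m
      rw [Matrix.smul_mul, hseq m]
    have hgq : g (Sn k p) = g p * Dn (-k) (Sn k p).1 (Sn k p).2 := mlim_unique hk' h3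
    refine ⟨?_, hgq⟩
    rw [hgq, mul_assoc, hC1', mul_one]
  -- g ≠ 0 a.e.
  have hgne0 : ∀ᵐ p ∂μ, g p ≠ 0 := by
    have hE0m : MeasurableSet {p : Ω × (Fin d → 𝕋) | g p ≠ 0} := by
      have hset : {p : Ω × (Fin d → 𝕋) | g p ≠ 0}
          = ⋃ i, ⋃ j, (fun p => g p i j) ⁻¹' ({0}ᶜ) := by
        ext p
        simp only [Set.mem_setOf_eq, Set.mem_iUnion, Set.mem_preimage, Set.mem_compl_iff,
          Set.mem_singleton_iff]
        constructor
        · intro h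
          by_contra hc
          push_neg at hc
          exact h (Matrix.ext fun i j => hc i j)
        · rintro ⟨i, j, hij⟩ h0
          exact hij (by rw [h0]; rfl)
      rw [hset]
      exact MeasurableSet.iUnion fun i => MeasurableSet.iUnion fun j =>
        (hgmeas i j) (measurableSet_singleton 0).compl
    have hpre : (fun p : Ω × (Fin d → 𝕋) => (Te p.1, fiterT 1 p.1 p.2)) ⁻¹'
        {p : Ω × (Fin d → 𝕋) | g p ≠ 0} =ᵐ[μ] {p : Ω × (Fin d → 𝕋) | g p ≠ 0} := by
      rw [eventuallyEq_set]
      filter_upwards [hgco] with p h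
      simp only [Set.mem_preimage, Set.mem_setOf_eq]
      have hSp : (Te p.1, fiterT 1 p.1 p.2) = Sn 1 p := by rw [hSn1]
      rw [hSp]
      constructor
      · intro hne hgp0
        exact hne (by rw [(h 1).2, hgp0, Matrix.zero_mul])
      · intro hne hgq0
        exact hne (by rw [(h 1).1, hgq0, Matrix.zero_mul])
    rcases herg.quasiErgodic.ae_empty_or_univ₀ hE0m.nullMeasurableSet hpre with h | h
    · exfalso
      obtain ⟨A, hAm, hApos, hA⟩ := hgne
      have hsub : A ⊆ {p : Ω × (Fin d → 𝕋) | g p ≠ 0} := fun p hp => hA p hp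
      have : μ {p : Ω × (Fin d → 𝕋) | g p ≠ 0} = 0 := by rwa [ae_eq_empty] at h
      exact absurd (lt_of_lt_of_le hApos (measure_mono hsub)) (by rw [this]; exact lt_irrefl 0)
    · rw [ae_eq_univ] at h
      exact h
  -- main lemma: second product statement
  -- measurability helpers
  have hnrmDn1meas : Measurable fun q : Ω × (Fin d → 𝕋) => nrm (Dn 1 q.1 q.2) := by
    show Measurable fun q : Ω × (Fin d → 𝕋) => ∑ i, ∑ j, |Dn 1 q.1 q.2 i j|
    apply Finset.measurable_sum
    intro i _
    apply Finset.measurable_sum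
    intro j _
    exact (hDnentry 1 i j).abs
  have hnrmDM : ∀ M : Matrix (Fin d) (Fin d) ℝ,
      Measurable fun q : Ω × (Fin d → 𝕋) => nrm (Dn 1 q.1 q.2 * M - M) := by
    intro M
    show Measurable fun q : Ω × (Fin d → 𝕋) => ∑ i, ∑ j, |(Dn 1 q.1 q.2 * M - M) i j|
    apply Finset.measurable_sum
    intro i _
    apply Finset.measurable_sum
    intro j _
    have heq : (fun q : Ω × (Fin d → 𝕋) => |(Dn 1 q.1 q.2 * M - M) i j|)
        = fun q => |(∑ k, Dn 1 q.1 q.2 i k * M k j) - M i j| := by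
      funext q
      rw [Matrix.sub_apply, Matrix.mul_apply]
    rw [heq]
    exact ((Finset.measurable_sum _ fun k _ => (hDnentry 1 i k).mul_const _).sub
      measurable_const).abs
  have hnrmgmeas : ∀ M : Matrix (Fin d) (Fin d) ℝ,
      Measurable fun p : Ω × (Fin d → 𝕋) => nrm (g p - M) := by
    intro M
    show Measurable fun p : Ω × (Fin d → 𝕋) => ∑ i, ∑ j, |(g p - M) i j|
    apply Finset.measurable_sum
    intro i _
    apply Finset.measurable_sum
    intro j _
    have heq : (fun p : Ω × (Fin d → 𝕋) => |(g p - M) i j|)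
        = fun p => |g p i j - M i j| := by
      funext p
      rw [Matrix.sub_apply]
    rw [heq]
    exact ((hgmeas i j).sub measurable_const).abs
  -- rational matrices
  set Mr : (Fin d → Fin d → ℚ) → Matrix (Fin d) (Fin d) ℝ :=
    fun r => Matrix.of fun i j => (r i j : ℝ) with hMrdef
  set Eset : ℕ → (Fin d → Fin d → ℚ) → ℕ → Set (Ω × (Fin d → 𝕋)) :=
    fun cc r k => {q | nrm (Dn 1 q.1 q.2) ≤ cc}
      ∩ {q | 1/((k:ℝ)+1) ≤ nrm (Dn 1 q.1 q.2 * Mr r - Mr r)} with hEdef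
  have hEmeas : ∀ cc r k, MeasurableSet (Eset cc r k) := fun cc r k =>
    (measurableSet_le hnrmDn1meas measurable_const).inter
      (measurableSet_le measurable_const (hnrmDM (Mr r)))
  have hMLcore : ∀ (cc : ℕ) (r : Fin d → Fin d → ℚ) (k : ℕ), 0 < μ (Eset cc r k) →
      ∀ᵐ p ∂μ, ¬(nrm (g p - Mr r) ≤ (1/((k:ℝ)+1))/(4*((cc:ℝ)+1))) := by
    intro cc r k hpos
    set M := Mr r
    set η : ℝ := 1/((k:ℝ)+1) with hηdef
    set δ : ℝ := η/(4*((cc:ℝ)+1)) with hδdef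
    have hηpos : 0 < η := by rw [hηdef]; positivity
    have hδpos : 0 < δ := by rw [hδdef]; positivity
    have hvisit := ae_frequently_visits herg (hEmeas cc r k) hpos
    rw [← hSn1] at hvisit
    filter_upwards [hconv, hvisit] with p hcp hfreq
    intro hδle
    have hw : Tendsto (fun m : ℕ => Dn 1 (Sn (m:ℤ) p).1 (Sn (m:ℤ) p).2
        * (((m:ℝ)^τ)⁻¹ • Dn (m:ℤ) p.1 p.2)) atTop (𝓝 (g p)) := by
      have h1 := hshift 1 p hcp
      apply h1.congr
      intro m
      rw [Matrix.mul_smul]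
      congr 1
      rw [add_comm]
      exact hDco 1 (m:ℤ) p.1 p.2
    have herr1 := tendsto_nrm_sub_zero hw
    have herr2 := tendsto_nrm_sub_zero hcp
    have herr := herr1.add (herr2.const_mul (cc:ℝ))
    rw [mul_zero, add_zero] at herr
    have hev : ∀ᶠ m : ℕ in atTop,
        nrm (Dn 1 (Sn (m:ℤ) p).1 (Sn (m:ℤ) p).2 * (((m:ℝ)^τ)⁻¹ • Dn (m:ℤ) p.1 p.2) - g p)
        + (cc:ℝ) * nrm (((m:ℝ)^τ)⁻¹ • Dn (m:ℤ) p.1 p.2 - g p) < η/2 := by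
      have := herr (Iio_mem_nhds (by positivity : (0:ℝ) < η/2))
      exact this
    obtain ⟨m, hmem, hlt⟩ := (hfreq.and_eventually hev).exists
    rw [hiter m p] at hmem
    obtain ⟨hBc, hDM⟩ := hmem
    set A := ((m:ℝ)^τ)⁻¹ • Dn (m:ℤ) p.1 p.2 with hAdef
    set D1 := Dn 1 (Sn (m:ℤ) p).1 (Sn (m:ℤ) p).2 with hD1def
    have hBc' : nrm D1 ≤ (cc:ℝ) := hBc
    have hDM' : η ≤ nrm (D1 * M - M) := hDM
    have hid2 : D1 * M - M = (D1 * (M - g p) + (D1 * A - g p)) + (D1 * (g p - A) + (g p - M)) := by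
      rw [Matrix.mul_sub, Matrix.mul_sub]
      abel
    have hb1 : nrm (D1 * (M - g p)) ≤ (cc:ℝ) * δ := by
      refine (nrm_mul_le _ _).trans ?_
      apply mul_le_mul hBc' ?_ (nrm_nonneg _) (Nat.cast_nonneg cc)
      rw [show M - g p = -(g p - M) by abel, nrm_neg]
      exact hδle
    have hb2 : nrm (D1 * (g p - A)) ≤ (cc:ℝ) * nrm (A - g p) := by
      refine (nrm_mul_le _ _).trans ?_
      apply mul_le_mul hBc' ?_ (nrm_nonneg _) (Nat.cast_nonneg cc)
      rw [show g p - A = -(A - g p) by abel, nrm_neg]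
    have hb3 : nrm (g p - M) ≤ δ := hδle
    have hchain : nrm (D1 * M - M) ≤ ((cc:ℝ) * δ + nrm (D1 * A - g p))
        + ((cc:ℝ) * nrm (A - g p) + δ) := by
      rw [hid2]
      refine (nrm_add_le _ _).trans ?_
      exact add_le_add ((nrm_add_le _ _).trans (add_le_add hb1 le_rfl))
        ((nrm_add_le _ _).trans (add_le_add hb2 hb3))
    have hccδ : ((cc:ℝ) + 1) * δ = η/4 := by
      rw [hδdef]
      field_simp
    have : η ≤ η/4 + η/2 := by
      have h5 := hDM'.trans hchain
      nlinarith [hlt, nrm_nonneg (D1 * A - g p), nrm_nonneg (A - g p)]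
    linarith
  have hML : ∀ᵐ z ∂(μ.prod μ), Dn 1 z.2.1 z.2.2 * g z.1 = g z.1 := by
    have hbad : ∀ (cc k : ℕ) (r : Fin d → Fin d → ℚ),
        (μ.prod μ) ({p | nrm (g p - Mr r) ≤ (1/((k:ℝ)+1))/(4*((cc:ℝ)+1))} ×ˢ Eset cc r k)
          = 0 := by
      intro cc k r
      rw [Measure.prod_prod]
      by_cases h0 : μ (Eset cc r k) = 0
      · rw [h0, mul_zero]
      · have hpos : 0 < μ (Eset cc r k) := lt_of_le_of_ne zero_le (Ne.symm h0)
        have := hMLcore cc r k hpos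
        have hN : μ {p | nrm (g p - Mr r) ≤ (1/((k:ℝ)+1))/(4*((cc:ℝ)+1))} = 0 :=
          measure_eq_zero_iff_ae_notMem.2 this
        rw [hN, zero_mul]
    have hae : ∀ᵐ z ∂(μ.prod μ), ∀ (cc k : ℕ) (r : Fin d → Fin d → ℚ),
        ¬(nrm (g z.1 - Mr r) ≤ (1/((k:ℝ)+1))/(4*((cc:ℝ)+1)) ∧ z.2 ∈ Eset cc r k) := by
      rw [ae_all_iff]
      intro cc
      rw [ae_all_iff]
      intro k
      rw [ae_all_iff]
      intro r
      have := measure_eq_zero_iff_ae_notMem.1 (hbad cc k r)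
      filter_upwards [this] with z hz hcon
      exact hz (Set.mem_prod.2 ⟨hcon.1, hcon.2⟩)
    filter_upwards [hae] with z hz
    obtain ⟨cc, hcc⟩ := exists_nat_ge (nrm (Dn 1 z.2.1 z.2.2))
    have hkey : ∀ k : ℕ, nrm (Dn 1 z.2.1 z.2.2 * g z.1 - g z.1) ≤ 3 * (1/((k:ℝ)+1)) := by
      intro k
      set η : ℝ := 1/((k:ℝ)+1) with hηdef
      set δ : ℝ := η/(4*((cc:ℝ)+1)) with hδdef
      have hηpos : 0 < η := by rw [hηdef]; positivity
      have hδpos : 0 < δ := by rw [hδdef]; positivity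
      obtain ⟨r, hr⟩ := exists_rat_matrix_near (g z.1) (lt_min hδpos hηpos)
      have hrδ : nrm (g z.1 - Mr r) ≤ δ := hr.trans (min_le_left _ _)
      have hrη : nrm (g z.1 - Mr r) ≤ η := hr.trans (min_le_right _ _)
      have hnotbad := hz cc k r
      have hqE : z.2 ∉ Eset cc r k := fun hmem => hnotbad ⟨hrδ, hmem⟩
      have hqB : z.2 ∈ {q : Ω × (Fin d → 𝕋) | nrm (Dn 1 q.1 q.2) ≤ (cc:ℝ)} := hcc
      have hsmall : nrm (Dn 1 z.2.1 z.2.2 * Mr r - Mr r) < η := by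
        by_contra hge
        push_neg at hge
        exact hqE ⟨hqB, hge⟩
      set D1 := Dn 1 z.2.1 z.2.2 with hD1def
      set M := Mr r
      have hid2 : D1 * g z.1 - g z.1 = (D1 * (g z.1 - M) + (D1 * M - M)) + (M - g z.1) := by
        rw [Matrix.mul_sub]
        abel
      have hb1 : nrm (D1 * (g z.1 - M)) ≤ (cc:ℝ) * δ :=
        (nrm_mul_le _ _).trans (mul_le_mul hcc hrδ (nrm_nonneg _) (Nat.cast_nonneg cc))
      have hb3 : nrm (M - g z.1) ≤ η := by
        rw [show M - g z.1 = -(g z.1 - M) by abel, nrm_neg]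
        exact hrη
      have hccδ : (cc:ℝ) * δ ≤ η := by
        have h4 : (0:ℝ) < 4*((cc:ℝ)+1) := by positivity
        rw [hδdef]
        have h5 : (cc:ℝ) * (η/(4*((cc:ℝ)+1))) = η * ((cc:ℝ)/(4*((cc:ℝ)+1))) := by ring
        rw [h5]
        have h6 : (cc:ℝ)/(4*((cc:ℝ)+1)) ≤ 1 := by
          rw [div_le_one h4]
          nlinarith [Nat.cast_nonneg (α := ℝ) cc]
        nlinarith [hηpos.le, h6, div_nonneg (Nat.cast_nonneg (α := ℝ) cc) h4.le]
      calc nrm (D1 * g z.1 - g z.1)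
          ≤ (nrm (D1 * (g z.1 - M)) + nrm (D1 * M - M)) + nrm (M - g z.1) := by
            rw [hid2]
            exact (nrm_add_le _ _).trans (add_le_add (nrm_add_le _ _) le_rfl)
        _ ≤ (η + η) + η := by
            refine add_le_add (add_le_add (hb1.trans hccδ) hsmall.le) hb3
        _ = 3 * η := by ring
    have hzero : nrm (Dn 1 z.2.1 z.2.2 * g z.1 - g z.1) = 0 := by
      by_contra hne
      have hvpos : 0 < nrm (Dn 1 z.2.1 z.2.2 * g z.1 - g z.1) :=
        lt_of_le_of_ne (nrm_nonneg _) (Ne.symm hne)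
      obtain ⟨k, hk⟩ := exists_nat_gt (3 / nrm (Dn 1 z.2.1 z.2.2 * g z.1 - g z.1))
      have h3 : 3 * (1/((k:ℝ)+1)) < nrm (Dn 1 z.2.1 z.2.2 * g z.1 - g z.1) := by
        rw [mul_one_div, div_lt_iff₀ (by positivity : (0:ℝ) < (k:ℝ)+1)]
        rw [div_lt_iff₀ hvpos] at hk
        nlinarith [hvpos]
      exact absurd (hkey k) (not_le.2 h3)
    have := nrm_eq_zero hzero
    rw [sub_eq_zero] at this
    exact this
  -- iterated version
  have hD1 : ∀ᵐ z ∂(μ.prod μ), ∀ m : ℕ, Dn (m : ℤ) z.2.1 z.2.2 * g z.1 = g z.1 := by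
    have hpush : ∀ m : ℕ, ∀ᵐ z ∂(μ.prod μ),
        Dn 1 (Sn (m:ℤ) z.2).1 (Sn (m:ℤ) z.2).2 * g z.1 = g z.1 := by
      intro m
      have hmp : MeasurePreserving (Prod.map (id : Ω × (Fin d → 𝕋) → Ω × (Fin d → 𝕋))
          (Sn (m:ℤ))) (μ.prod μ) (μ.prod μ) :=
        (MeasurePreserving.id μ).prod (hSnmp (m:ℤ))
      exact ae_of_ae_map hmp.aemeasurable (by rw [hmp.map_eq]; exact hML)
    filter_upwards [ae_all_iff.2 hpush] with z hz
    intro m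
    induction m with
    | zero =>
        rw [Nat.cast_zero, hD0, Matrix.one_mul]
    | succ m ih =>
        have hcast : ((m + 1 : ℕ) : ℤ) = 1 + (m : ℤ) := by push_cast; ring
        rw [hcast, hDco 1 (m:ℤ) z.2.1 z.2.2, Matrix.mul_assoc, ih]
        exact hz m
  have hprod2 : ∀ᵐ z ∂(μ.prod μ), g z.2 * g z.1 = 0 := by
    have hconv2 : ∀ᵐ z ∂(μ.prod μ),
        Tendsto (fun n : ℕ => ((n:ℝ)^τ)⁻¹ • Dn (n:ℤ) z.2.1 z.2.2) atTop (𝓝 (g z.2)) := by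
      exact ae_of_ae_map (f := (Prod.snd : (Ω × (Fin d → 𝕋)) × (Ω × (Fin d → 𝕋)) → _))
        measurable_snd.aemeasurable
        (p := fun y => Tendsto (fun n : ℕ => ((n:ℝ)^τ)⁻¹ • Dn (n:ℤ) y.1 y.2) atTop (𝓝 (g y)))
        (by rw [Measure.map_snd_prod]; simp only [measure_univ, one_smul]; exact hconv)
    filter_upwards [hD1, hconv2] with z h1 h2
    have h3 : Tendsto (fun n : ℕ => (((n:ℝ)^τ)⁻¹ • Dn (n:ℤ) z.2.1 z.2.2) * g z.1) atTop
        (𝓝 (g z.2 * g z.1)) := tend_mul_right h2 (g z.1)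
    have hsc : Tendsto (fun n : ℕ => ((n:ℝ)^τ)⁻¹) atTop (𝓝 0) := by
      have := (tendsto_rpow_atTop hτ).comp tendsto_natCast_atTop_atTop
      exact this.inv_tendsto_atTop
    have h4 : Tendsto (fun n : ℕ => (((n:ℝ)^τ)⁻¹ • Dn (n:ℤ) z.2.1 z.2.2) * g z.1) atTop
        (𝓝 0) := by
      have h5 := tend_smul hsc (tendsto_const_nhds (x := g z.1))
      rw [zero_smul] at h5
      apply h5.congr
      intro n
      rw [Matrix.smul_mul, h1 n]
    exact mlim_unique h3 h4
  have hprod1 : ∀ᵐ z ∂(μ.prod μ), g z.1 * g z.2 = 0 := by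
    have hswap : MeasurePreserving (Prod.swap : (Ω × (Fin d → 𝕋)) × (Ω × (Fin d → 𝕋)) → _)
        (μ.prod μ) (μ.prod μ) := ⟨measurable_swap, Measure.prod_swap⟩
    exact ae_of_ae_map hswap.aemeasurable (by rw [hswap.map_eq]; exact hprod2)
  have hg2 : ∀ᵐ p ∂μ, g p * g p = 0 := by
    set 𝒱 : Set (Submodule ℝ (Fin d → ℝ)) :=
      {W | ∀ᵐ p ∂μ, ∀ j, (fun i => g p i j) ∈ W} with hVdef
    have htop : (⊤ : Submodule ℝ (Fin d → ℝ)) ∈ 𝒱 := by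
      show ∀ᵐ p ∂μ, ∀ j, (fun i => g p i j) ∈ (⊤ : Submodule ℝ (Fin d → ℝ))
      filter_upwards with p j
      exact Submodule.mem_top
    have hranks_ne : {n | ∃ W ∈ 𝒱, Module.finrank ℝ W = n}.Nonempty := ⟨_, ⊤, htop, rfl⟩
    obtain ⟨W₀, hW₀, hrank⟩ := Nat.sInf_mem hranks_ne
    have hW₀ae : ∀ᵐ p ∂μ, ∀ j, (fun i => g p i j) ∈ W₀ := hW₀
    have hmin : ∀ W ∈ 𝒱, W₀ ≤ W := by
      intro W hW
      have hWae : ∀ᵐ p ∂μ, ∀ j, (fun i => g p i j) ∈ W := hW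
      have hinter : W₀ ⊓ W ∈ 𝒱 := by
        show ∀ᵐ p ∂μ, ∀ j, (fun i => g p i j) ∈ W₀ ⊓ W
        filter_upwards [hW₀ae, hWae] with p h1 h2
        intro j
        exact Submodule.mem_inf.2 ⟨h1 j, h2 j⟩
      have hge : sInf {n | ∃ W ∈ 𝒱, Module.finrank ℝ W = n} ≤ Module.finrank ℝ ↥(W₀ ⊓ W) :=
        Nat.sInf_le ⟨W₀ ⊓ W, hinter, rfl⟩
      have heq : W₀ ⊓ W = W₀ := by
        apply Submodule.eq_of_le_of_finrank_le inf_le_left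
        rw [hrank]
        exact hge
      rw [← heq]
      exact inf_le_right
    have hkerae : ∀ᵐ q ∂μ, ∀ v ∈ W₀, Matrix.mulVec (g q) v = 0 := by
      have hfub : ∀ᵐ q ∂μ, ∀ᵐ p ∂μ, g q * g p = 0 := Measure.ae_ae_of_ae_prod hprod1
      filter_upwards [hfub] with q hq
      have hker𝒱 : LinearMap.ker (Matrix.mulVecLin (g q)) ∈ 𝒱 := by
        show ∀ᵐ p ∂μ, ∀ j, (fun i => g p i j) ∈ LinearMap.ker (Matrix.mulVecLin (g q))
        filter_upwards [hq] with p hp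
        intro j
        rw [LinearMap.mem_ker, Matrix.mulVecLin_apply]
        have hcol : Matrix.mulVec (g q) (fun i => g p i j) = fun i => (g q * g p) i j := by
          funext i
          simp [Matrix.mulVec, dotProduct, Matrix.mul_apply]
        rw [hcol, hp]
        funext i
        simp
      intro v hv
      have := hmin _ hker𝒱 hv
      rwa [LinearMap.mem_ker, Matrix.mulVecLin_apply] at this
    filter_upwards [hW₀ae, hkerae] with p h1 h2
    ext i j
    have hcol : (g p * g p) i j = Matrix.mulVec (g p) (fun i' => g p i' j) i := by
      simp [Matrix.mul_apply, Matrix.mulVec, dotProduct]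
    rw [hcol, h2 _ (h1 j)]
    simp
  constructor
  · filter_upwards [hgne0, hg2, hgco] with p h1 h2 h3
    exact ⟨h1, h2, fun n => (h3 n).1⟩
  · filter_upwards [hprod1, hML] with z h1 h2
    exact ⟨h1, h2.symm⟩

end
end

section
/- Let f be a C^1 random dynamical system on T^2 over (Ω, F, P, T), and let c be an irrational real number such that for P-a.e. ω ∈ Ω and all x ∈ T^2 the column vector (c, 1)^T is fixed by the derivative: Df_ω(x) (c, 1)^T = (c, 1)^T. Then for P-a.e. ω the map f_ω is a translation of the torus: f_ω(x1, x2) = (x1 + α(ω), x2 + γ(ω)) for measurable functions α, γ : Ω → T. Consequently, for any τ > 0 the sequence n^{-τ} Df^n tends uniformly to zero. -/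
open MeasureTheory Filter Topology Matrix

noncomputable section

/-- The forward iterates `f^n_ω = f_{T^{n-1}ω} ∘ ⋯ ∘ f_{Tω} ∘ f_ω` of a random
dynamical system generated by `F` over `T`. -/
def RDSiter {Ω α : Type*} (T : Ω → Ω) (F : Ω → α → α) : ℕ → Ω → α → α
  | 0 => fun _ x => x
  | n + 1 => fun ω x => RDSiter T F n (T ω) (F ω x)

-- helper: r = 0 if |r| * k bounded
lemma zero_of_bdd {r C : ℝ} (h : ∀ k : ℕ, |r| * k ≤ C) : r = 0 := by
  by_contra hr
  obtain ⟨n, hn⟩ := exists_nat_gt (C / |r|)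
  have h2 : 0 < |r| := abs_pos.mpr hr
  have h3 : C < |r| * n := by
    rw [div_lt_iff₀ h2] at hn; linarith [hn]
  exact absurd (h n) (not_le.mpr h3)

-- helper: irrationality coefficient
lemma int_coeff_zero {c : ℝ} (hc : Irrational c) {a b : ℤ} (h : (a : ℝ) * c + b = 0) :
    a = 0 ∧ b = 0 := by
  have ha : a = 0 := by
    by_contra ha
    have haR : (a : ℝ) ≠ 0 := Int.cast_ne_zero.mpr ha
    refine hc ⟨(-b : ℚ) / (a : ℚ), ?_⟩
    have : c = (-b : ℝ) / (a : ℝ) := by field_simp; linarith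
    rw [this]; push_cast; ring
  refine ⟨ha, ?_⟩
  have : (b : ℝ) = 0 := by rw [ha] at h; simpa using h
  exact_mod_cast this

-- density of {k c + m}
lemma dense_orbit {c : ℝ} (hc : Irrational c) :
    Dense {s : ℝ | ∃ k m : ℤ, s = k * c + m} := by
  set S : AddSubgroup ℝ :=
    { carrier := {s : ℝ | ∃ k m : ℤ, s = k * c + m}
      add_mem' := by
        rintro x y ⟨k, m, rfl⟩ ⟨k', m', rfl⟩
        exact ⟨k + k', m + m', by push_cast; ring⟩
      zero_mem' := ⟨0, 0, by push_cast; ring⟩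
      neg_mem' := by
        rintro x ⟨k, m, rfl⟩
        exact ⟨-k, -m, by push_cast; ring⟩ } with hS
  rcases S.dense_or_cyclic with h | ⟨a, ha⟩
  · exact h
  · exfalso
    have hcS : c ∈ S := ⟨1, 0, by push_cast; ring⟩
    have h1S : (1 : ℝ) ∈ S := ⟨0, 1, by push_cast; ring⟩
    rw [ha, AddSubgroup.mem_closure_singleton] at hcS h1S
    obtain ⟨n, hn⟩ := hcS
    obtain ⟨n', hn'⟩ := h1S
    rw [zsmul_eq_mul] at hn hn'
    have hc2 : ((n' : ℤ) : ℝ) * c + ((-n : ℤ) : ℝ) = 0 := by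
      push_cast
      calc (n' : ℝ) * c + (-n : ℝ) = (n : ℝ) * ((n' : ℝ) * a) - n := by rw [← hn]; ring
        _ = 0 := by rw [hn']; ring
    obtain ⟨h1, h2⟩ := int_coeff_zero hc hc2
    rw [h1] at hn'; simp at hn'


-- CLM applied to vector as sum over basis
lemma clm_apply_eq {d : ℕ} (L : (Fin d → ℝ) →L[ℝ] ℝ) (v : Fin d → ℝ) :
    L v = ∑ j, L (Pi.single j 1) * v j := by
  have := LinearMap.pi_apply_eq_sum_univ (L : (Fin d → ℝ) →ₗ[ℝ] ℝ) v
  simp only [ContinuousLinearMap.coe_coe] at this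
  rw [this]
  refine Finset.sum_congr rfl fun j _ => ?_
  rw [smul_eq_mul, mul_comm]
  congr 1
  congr 1
  funext j'
  simp [Pi.single_apply, eq_comm]

-- constancy along a line with prescribed directional derivative
lemma line_translate {d : ℕ} (f : (Fin d → ℝ) → ℝ) (hf : Differentiable ℝ f)
    (v : Fin d → ℝ) (w : ℝ) (hd : ∀ x, fderiv ℝ f x v = w) :
    ∀ (x : Fin d → ℝ) (t : ℝ), f (x + t • v) = f x + t * w := by
  intro x t
  set φ : ℝ → ℝ := fun t => f (x + t • v) - t * w with hφ
  have hφd : ∀ s, HasDerivAt φ 0 s := by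
    intro s
    have h1 : HasDerivAt (fun t : ℝ => x + t • v) v s := by
      simpa using ((hasDerivAt_id s).smul_const v).const_add x
    have h2 : HasDerivAt (fun t : ℝ => f (x + t • v)) (fderiv ℝ f (x + s • v) v) s :=
      (hf _).hasFDerivAt.comp_hasDerivAt s h1
    have h3 : HasDerivAt (fun t : ℝ => t * w) w s := by
      simpa using (hasDerivAt_id s).mul_const w
    have h4 := h2.sub h3
    rw [hd, sub_self] at h4
    exact h4
  have hconst := is_const_of_deriv_eq_zero (fun s => (hφd s).differentiableAt)
    (fun s => (hφd s).deriv) t 0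
  simp only [hφ, zero_smul, add_zero, zero_mul, sub_zero] at hconst
  linarith [hconst]

lemma lin_zero {c C d q : ℝ} (p : ℝ)
    (h : ∀ k : ℕ, |p * (⌊(k : ℝ) * c⌋ : ℝ) + q * k - k * d| ≤ C) :
    p * c + q - d = 0 := by
  apply zero_of_bdd (C := C + |p|)
  intro k
  have hid : (p * c + q - d) * k =
      (p * (⌊(k : ℝ) * c⌋ : ℝ) + q * k - k * d) + p * Int.fract ((k : ℝ) * c) := by
    rw [Int.fract]; ring
  have h2 : |p * Int.fract ((k : ℝ) * c)| ≤ |p| := by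
    rw [abs_mul]
    have h3 : |Int.fract ((k : ℝ) * c)| ≤ 1 := by
      rw [abs_of_nonneg (Int.fract_nonneg _)]
      exact le_of_lt (Int.fract_lt_one _)
    nlinarith [abs_nonneg p]
  calc |p * c + q - d| * k = |(p * c + q - d) * k| := by
        rw [abs_mul, Nat.abs_cast]
    _ ≤ |p * (⌊(k : ℝ) * c⌋ : ℝ) + q * k - k * d| + |p * Int.fract ((k : ℝ) * c)| := by
        rw [hid]; exact abs_add_le _ _
    _ ≤ C + |p| := add_le_add (h k) h2


lemma core (f : (Fin 2 → ℝ) → (Fin 2 → ℝ)) (hf : ContDiff ℝ 1 f)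
    (N : Matrix (Fin 2) (Fin 2) ℤ)
    (hper : ∀ (x : Fin 2 → ℝ) (m : Fin 2 → ℤ),
      f (x + fun i => (m i : ℝ)) = f x + fun i => ((N *ᵥ m) i : ℝ))
    (c : ℝ) (hc : Irrational c)
    (H : ∀ x, Dmat f x *ᵥ ![c, 1] = ![c, 1]) :
    ∀ x, f x = x + f 0 := by
  set v : Fin 2 → ℝ := ![c, 1] with hv
  have hfd : Differentiable ℝ f := hf.differentiable one_ne_zero
  have hfi : ∀ i : Fin 2, Differentiable ℝ (fun y => f y i) := differentiable_pi.mp hfd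
  -- directional derivative along v equals v
  have hdir : ∀ (x : Fin 2 → ℝ) (i : Fin 2), fderiv ℝ (fun y => f y i) x v = v i := by
    intro x i
    have hH := congrFun (H x) i
    have hsum : (Dmat f x *ᵥ v) i
        = ∑ j, fderiv ℝ (fun y => f y i) x (Pi.single j 1) * v j := by
      simp [Dmat, Matrix.mulVec, dotProduct]
    rw [clm_apply_eq]
    rw [hsum] at hH
    exact hH
  -- translation along the line direction v
  have hline : ∀ (x : Fin 2 → ℝ) (t : ℝ), f (x + t • v) = f x + t • v := by
    intro x t; funext i
    have h := line_translate (fun y => f y i) (hfi i) v (v i) (fun x => hdir x i) x t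
    simpa using h
  -- compactness bound
  have hsegc : Continuous (fun s : ℝ => (![s, 0] : Fin 2 → ℝ)) := by
    refine continuous_pi fun i => ?_
    fin_cases i
    · exact continuous_id
    · exact continuous_const
  obtain ⟨C, hC⟩ := (isCompact_Icc (a := (0:ℝ)) (b := 1)).exists_bound_of_continuousOn
    (f := fun s : ℝ => f ![s, 0] - f 0)
    (((hf.continuous.comp hsegc).sub continuous_const).continuousOn)
  -- key bounded relation
  have hkey : ∀ (k : ℕ) (i : Fin 2),
      |((N *ᵥ ![⌊(k:ℝ) * c⌋, (k:ℤ)]) i : ℝ) - (k:ℝ) * v i| ≤ C := by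
    intro k i
    have hdecomp : ((k:ℝ) • v : Fin 2 → ℝ)
        = (![Int.fract ((k:ℝ) * c), 0] : Fin 2 → ℝ)
          + fun j => (((![⌊(k:ℝ) * c⌋, (k:ℤ)] : Fin 2 → ℤ)) j : ℝ) := by
      funext j
      fin_cases j
      · show (k:ℝ) * c = ((k:ℝ) * c - ⌊(k:ℝ) * c⌋) + ((⌊(k:ℝ) * c⌋ : ℤ) : ℝ)
        ring
      · show (k:ℝ) * 1 = 0 + ((k:ℤ) : ℝ)
        push_cast
        ring
    have h1 : f ((k:ℝ) • v) = f 0 + (k:ℝ) • v := by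
      have := hline 0 (k:ℝ); rwa [zero_add] at this
    have h2 := hper ![Int.fract ((k:ℝ) * c), 0] ![⌊(k:ℝ) * c⌋, (k:ℤ)]
    rw [← hdecomp, h1] at h2
    have h4 := congrFun h2 i
    have h5 : ((N *ᵥ ![⌊(k:ℝ) * c⌋, (k:ℤ)]) i : ℝ) - (k:ℝ) * v i
        = (f 0 - f ![Int.fract ((k:ℝ) * c), 0]) i := by
      simp only [Pi.add_apply, Pi.smul_apply, smul_eq_mul, Pi.sub_apply] at h4 ⊢
      linarith
    rw [h5]
    have hmem : Int.fract ((k:ℝ) * c) ∈ Set.Icc (0:ℝ) 1 :=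
      ⟨Int.fract_nonneg _, le_of_lt (Int.fract_lt_one _)⟩
    calc |(f 0 - f ![Int.fract ((k:ℝ) * c), 0]) i|
        = ‖(f 0 - f ![Int.fract ((k:ℝ) * c), 0]) i‖ := (Real.norm_eq_abs _).symm
      _ ≤ ‖f 0 - f ![Int.fract ((k:ℝ) * c), 0]‖ := norm_le_pi_norm _ i
      _ = ‖f ![Int.fract ((k:ℝ) * c), 0] - f 0‖ := norm_sub_rev _ _
      _ ≤ C := hC _ hmem
  -- extract the matrix entries
  have hrow0 : ((N 0 0 : ℝ) - 1) * c + (N 0 1 : ℝ) = 0 := by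
    have h := lin_zero (c := c) (C := C) (d := c) (q := (N 0 1 : ℝ)) (N 0 0 : ℝ) ?_
    · linarith
    · intro k
      have h := hkey k 0
      simp only [Matrix.mulVec, dotProduct, Fin.sum_univ_two, hv, Matrix.cons_val_zero,
        Matrix.cons_val_one, Matrix.head_cons] at h
      push_cast at h
      convert h using 2 <;> ring
  have hrow1 : (N 1 0 : ℝ) * c + (N 1 1 : ℝ) - 1 = 0 := by
    have h := lin_zero (c := c) (C := C) (d := 1) (q := (N 1 1 : ℝ)) (N 1 0 : ℝ) ?_
    · linarith
    · intro k
      have h := hkey k 1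
      simp only [Matrix.mulVec, dotProduct, Fin.sum_univ_two, hv, Matrix.cons_val_zero,
        Matrix.cons_val_one, Matrix.head_cons] at h
      push_cast at h
      convert h using 2 <;> ring
  have hN00 : N 0 0 = 1 ∧ N 0 1 = 0 := by
    have h0 : ((N 0 0 - 1 : ℤ) : ℝ) * c + ((N 0 1 : ℤ) : ℝ) = 0 := by push_cast; linarith
    obtain ⟨h1, h2⟩ := int_coeff_zero hc h0
    exact ⟨by omega, h2⟩
  have hN11 : N 1 0 = 0 ∧ N 1 1 = 1 := by
    have h0 : ((N 1 0 : ℤ) : ℝ) * c + ((N 1 1 - 1 : ℤ) : ℝ) = 0 := by push_cast; linarith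
    obtain ⟨h1, h2⟩ := int_coeff_zero hc h0
    exact ⟨h1, by omega⟩
  -- simplified periodicity
  have hperI : ∀ (x : Fin 2 → ℝ) (m : Fin 2 → ℤ),
      f (x + fun i => (m i : ℝ)) = f x + fun i => (m i : ℝ) := by
    intro x m
    rw [hper]
    congr 1
    funext i
    fin_cases i <;>
      simp [Matrix.mulVec, dotProduct, Fin.sum_univ_two, hN00.1, hN00.2, hN11.1, hN11.2]
  -- the periodic part is constant
  set g : (Fin 2 → ℝ) → (Fin 2 → ℝ) := fun x => f x - x with hg
  have hgv : ∀ (x : Fin 2 → ℝ) (t : ℝ), g (x + t • v) = g x := by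
    intro x t; simp only [hg]; rw [hline]; abel
  have hgm : ∀ (x : Fin 2 → ℝ) (m : Fin 2 → ℤ), g (x + fun i => (m i : ℝ)) = g x := by
    intro x m; simp only [hg]; rw [hperI]; abel
  have hy0 : ∀ s : ℝ, (∃ k m : ℤ, s = k * c + m) → g ![s, 0] = g 0 := by
    rintro s ⟨k, m, rfl⟩
    have h1 : (![(k:ℝ) * c + m, 0] : Fin 2 → ℝ)
        = ((0 : Fin 2 → ℝ) + (k:ℝ) • v) + fun i => ((![m, -k] : Fin 2 → ℤ) i : ℝ) := by
      funext j
      fin_cases j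
      · show (k:ℝ) * c + (m:ℝ) = (0 + (k:ℝ) * c) + ((m:ℤ) : ℝ)
        push_cast
        ring
      · show (0:ℝ) = (0 + (k:ℝ) * 1) + ((-k : ℤ) : ℝ)
        push_cast
        ring
    rw [h1]
    exact (hgm _ _).trans (hgv 0 _)
  have hclosed : IsClosed {s : ℝ | g ![s, 0] = g 0} :=
    isClosed_eq ((hf.continuous.sub continuous_id).comp hsegc) continuous_const
  have huniv : {s : ℝ | g ![s, 0] = g 0} = Set.univ := by
    apply Set.eq_univ_of_univ_subset
    rw [← (dense_orbit hc).closure_eq]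
    exact hclosed.closure_subset_iff.mpr (fun s hs => hy0 s hs)
  have hall : ∀ x, g x = g 0 := by
    intro x
    have h1 : g (x + (-(x 1)) • v) = g x := hgv x _
    set y : Fin 2 → ℝ := x + (-(x 1)) • v with hy
    have hy1 : y 1 = 0 := by
      show x 1 + (-(x 1)) * 1 = 0
      ring
    have hyeq : y = ![y 0, 0] := by
      funext j; fin_cases j
      · rfl
      · exact hy1
    have h2 : g ![y 0, 0] = g 0 := Set.eq_univ_iff_forall.mp huniv (y 0)
    rw [← h1, hyeq]
    exact h2
  intro x
  funext i
  have h := congrFun (hall x) i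
  simp only [hg, Pi.sub_apply, Pi.zero_apply, sub_zero] at h
  simp only [Pi.add_apply]
  linarith

lemma Dmat_translate (Cv : Fin 2 → ℝ) (x : Fin 2 → ℝ) (i j : Fin 2) :
    Dmat (fun y => y + Cv) x i j = if i = j then 1 else 0 := by
  have h : HasFDerivAt (fun y : Fin 2 → ℝ => (y + Cv) i)
      (ContinuousLinearMap.proj (R := ℝ) (φ := fun _ : Fin 2 => ℝ) i) x :=
    ((ContinuousLinearMap.proj (R := ℝ) (φ := fun _ : Fin 2 => ℝ) i).hasFDerivAt).add_const (Cv i)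
  show fderiv ℝ (fun y : Fin 2 → ℝ => (y + Cv) i) x (Pi.single j 1) = _
  rw [h.fderiv]
  simp [Pi.single_apply, eq_comm]

lemma RDSiter_translate {Ω : Type*} (T : Ω → Ω) (FL : Ω → (Fin 2 → ℝ) → (Fin 2 → ℝ)) :
    ∀ (n : ℕ) (ω : Ω), (∀ (k : ℕ) (x : Fin 2 → ℝ), FL (T^[k] ω) x = x + FL (T^[k] ω) 0) →
      ∃ Cv : Fin 2 → ℝ, ∀ x, RDSiter T FL n ω x = x + Cv := by
  intro n
  induction n with
  | zero => exact fun ω h => ⟨0, fun x => by simp [RDSiter]⟩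
  | succ n ih =>
    intro ω h
    obtain ⟨Cv, hC⟩ := ih (T ω) (fun k x => by
      have h2 := h (k + 1) x
      simpa only [Function.iterate_succ_apply] using h2)
    refine ⟨FL ω 0 + Cv, fun x => ?_⟩
    show RDSiter T FL n (T ω) (FL ω x) = x + (FL ω 0 + Cv)
    rw [show FL ω x = x + FL ω 0 from by simpa using h 0 x, hC, add_assoc]

/-- Let `f` be a `C¹` random dynamical system on `𝕋²` over an
ergodic automorphism `T` of a Lebesgue probability space, and let `c` be irrational
such that for `P`-a.e. `ω` and all `x` the vector `(c,1)ᵀ` is fixed by `Df_ω(x)`.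
Then for `P`-a.e. `ω` the map `f_ω` is a translation of the torus,
`f_ω(x₁,x₂) = (x₁+α(ω), x₂+γ(ω))` with `α, γ : Ω → 𝕋` measurable; consequently for
every `τ > 0` the sequence `n^{-τ} Df^n` tends uniformly to zero. -/
theorem stmt_5
    {Ω : Type*} [MeasurableSpace Ω] [StandardBorelSpace Ω]
    (P : Measure Ω) [IsProbabilityMeasure P]
    (T : Ω → Ω) (hT : Ergodic T P)
    (FL : Ω → (Fin 2 → ℝ) → (Fin 2 → ℝ))
    (fT : Ω → (Fin 2 → 𝕋) → (Fin 2 → 𝕋))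
    (hFLmeas : Measurable (Function.uncurry FL))
    (hFL : ∀ ω, ContDiff ℝ 1 (FL ω))
    (N : Ω → Matrix (Fin 2) (Fin 2) ℤ) (hNdet : ∀ ω, IsUnit (N ω).det)
    (hper : ∀ ω (x : Fin 2 → ℝ) (m : Fin 2 → ℤ),
      FL ω (x + fun i => (m i : ℝ)) = FL ω x + fun i => ((N ω *ᵥ m) i : ℝ))
    (hlift : ∀ ω x, fT ω (Tproj x) = Tproj (FL ω x))
    (hbij : ∀ ω, Function.Bijective (fT ω))
    (c : ℝ) (hc : Irrational c)
    (hfix : ∀ᵐ ω ∂P, ∀ x : Fin 2 → ℝ, Dmat (FL ω) x *ᵥ ![c, 1] = ![c, 1]) :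
    -- P-a.e. the lift is an exact translation of ℝ²
    (∀ᵐ ω ∂P, ∀ x : Fin 2 → ℝ, FL ω x = x + FL ω 0) ∧
    -- P-a.e. f_ω is a translation of the torus, with measurable α, γ : Ω → 𝕋
    (∃ a g : Ω → 𝕋, Measurable a ∧ Measurable g ∧
      ∀ᵐ ω ∂P, ∀ x : Fin 2 → ℝ,
        fT ω (Tproj x) = ![((x 0 : ℝ) : 𝕋) + a ω, ((x 1 : ℝ) : 𝕋) + g ω]) ∧
    -- consequently n^{-τ} Df^n tends uniformly (in (ω,x), a.e. in ω) to zero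
    (∀ τ : ℝ, 0 < τ → ∀ ε : ℝ, 0 < ε → ∃ n₀ : ℕ, ∀ n ≥ n₀, ∀ᵐ ω ∂P,
      ∀ x : Fin 2 → ℝ,
        (∑ i, ∑ j, |(((n : ℝ) ^ τ)⁻¹ • Dmat (RDSiter T FL n ω) x) i j|) < ε) := by
  have htrans : ∀ᵐ ω ∂P, ∀ x : Fin 2 → ℝ, FL ω x = x + FL ω 0 := by
    filter_upwards [hfix] with ω hω
    exact core (FL ω) (hFL ω) (N ω) (hper ω) c hc hω
  have hmeas0 : Measurable (fun ω => FL ω 0) :=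
    hFLmeas.comp (measurable_id.prodMk measurable_const)
  refine ⟨htrans, ?_, ?_⟩
  · refine ⟨fun ω => ((FL ω 0 0 : ℝ) : 𝕋), fun ω => ((FL ω 0 1 : ℝ) : 𝕋), ?_, ?_, ?_⟩
    · exact (AddCircle.continuous_mk' (1:ℝ)).measurable.comp
        ((measurable_pi_apply 0).comp hmeas0)
    · exact (AddCircle.continuous_mk' (1:ℝ)).measurable.comp
        ((measurable_pi_apply 1).comp hmeas0)
    · filter_upwards [htrans] with ω hω x
      rw [hlift, hω x]
      funext i
      fin_cases i
      · show ((x 0 + FL ω 0 0 : ℝ) : 𝕋) = ((x 0 : ℝ) : 𝕋) + ((FL ω 0 0 : ℝ) : 𝕋)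
        exact AddCircle.coe_add (p := (1:ℝ)) _ _
      · show ((x 1 + FL ω 0 1 : ℝ) : 𝕋) = ((x 1 : ℝ) : 𝕋) + ((FL ω 0 1 : ℝ) : 𝕋)
        exact AddCircle.coe_add (p := (1:ℝ)) _ _
  · intro τ hτ ε hε
    have htends : Tendsto (fun n : ℕ => ((n : ℝ)) ^ τ) atTop atTop :=
      (tendsto_rpow_atTop hτ).comp tendsto_natCast_atTop_atTop
    obtain ⟨n₀, hn₀⟩ := eventually_atTop.mp (htends.eventually_gt_atTop (2 / ε))
    refine ⟨n₀, fun n hn => ?_⟩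
    have hA : (2 : ℝ) / ε < (n : ℝ) ^ τ := hn₀ n hn
    have hApos : 0 < (n : ℝ) ^ τ := lt_trans (div_pos two_pos hε) hA
    have hall : ∀ᵐ ω ∂P, ∀ (k : ℕ) (x : Fin 2 → ℝ),
        FL (T^[k] ω) x = x + FL (T^[k] ω) 0 :=
      ae_all_iff.mpr fun k =>
        (hT.toMeasurePreserving.iterate k).quasiMeasurePreserving.ae htrans
    filter_upwards [hall] with ω hω x
    obtain ⟨Cv, hCv⟩ := RDSiter_translate T FL n ω hω
    have hD : ∀ i j, Dmat (RDSiter T FL n ω) x i j = if i = j then 1 else 0 := by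
      intro i j
      rw [show RDSiter T FL n ω = fun y => y + Cv from funext hCv]
      exact Dmat_translate Cv x i j
    have hsum : (∑ i, ∑ j, |(((n : ℝ) ^ τ)⁻¹ • Dmat (RDSiter T FL n ω) x) i j|)
        = 2 * ((n : ℝ) ^ τ)⁻¹ := by
      simp only [Fin.sum_univ_two, Matrix.smul_apply, hD, smul_eq_mul]
      norm_num [abs_of_nonneg (inv_nonneg.mpr hApos.le)]
      ring
    rw [hsum]
    have h1 : (2 : ℝ) < (n : ℝ) ^ τ * ε := (div_lt_iff₀ hε).mp hA
    have h2 : ((n : ℝ) ^ τ)⁻¹ * ((n : ℝ) ^ τ) = 1 := inv_mul_cancel₀ hApos.ne'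
    nlinarith [inv_nonneg.mpr hApos.le]

end
end

section
/- Suppose A and B are non-zero real 3×3 matrices such that A^2 = B^2 = AB = BA = 0. Then there exist three non-zero vectors a, b, c ∈ R^3 (viewed as 1×3 matrices) such that either A = a^T b and B = a^T c with b a^T = 0 and c a^T = 0, or A = a^T c and B = b^T c with c a^T = 0 and c b^T = 0. -/
open Matrix

/-- Explicit cross product on `Fin 3 → ℝ`. -/
private def cp (x y : Fin 3 → ℝ) : Fin 3 → ℝ :=
  ![x 1 * y 2 - x 2 * y 1, x 2 * y 0 - x 0 * y 2, x 0 * y 1 - x 1 * y 0]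

private lemma cp_eq_zero_imp {x y : Fin 3 → ℝ} (h : cp x y = 0) (hx : x ≠ 0) :
    ∃ t : ℝ, y = t • x := by
  have h0 := congrFun h 0
  have h1 := congrFun h 1
  have h2 := congrFun h 2
  simp only [cp, Pi.zero_apply] at h0 h1 h2
  norm_num at h0 h1 h2
  change x 0 * y 1 - x 1 * y 0 = 0 at h2
  have key : ∀ i j : Fin 3, x i * y j = x j * y i := by
    intro i j
    fin_cases i <;> fin_cases j <;> simp <;> linarith
  obtain ⟨k, hk⟩ : ∃ k, x k ≠ 0 := by
    by_contra hc
    push_neg at hc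
    exact hx (funext hc)
  refine ⟨y k / x k, funext fun i => ?_⟩
  have := key k i
  simp only [Pi.smul_apply, smul_eq_mul]
  field_simp
  linarith

private lemma cp_triple (x y z : Fin 3 → ℝ) :
    cp x (cp y z) = (x ⬝ᵥ z) • y - (x ⬝ᵥ y) • z := by
  funext i
  fin_cases i <;>
    simp [cp, dotProduct, Fin.sum_univ_three] <;> ring

private lemma vmv_mul (a b u v : Fin 3 → ℝ) :
    vecMulVec a b * vecMulVec u v = (b ⬝ᵥ u) • vecMulVec a v := by
  ext i j
  simp only [mul_apply, vecMulVec_apply, Matrix.smul_apply, smul_eq_mul, dotProduct,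
    Finset.sum_mul]
  exact Finset.sum_congr rfl fun k _ => by ring

private lemma vmv_ne_zero {a b : Fin 3 → ℝ} (ha : a ≠ 0) (hb : b ≠ 0) :
    vecMulVec a b ≠ 0 := by
  obtain ⟨i, hi⟩ : ∃ i, a i ≠ 0 := by
    by_contra hc; push_neg at hc; exact ha (funext hc)
  obtain ⟨j, hj⟩ : ∃ j, b j ≠ 0 := by
    by_contra hc; push_neg at hc; exact hb (funext hc)
  intro h
  have := congrFun (congrFun h i) j
  simp [vecMulVec_apply] at this
  tauto

private lemma vmv_smul_left (t : ℝ) (a v : Fin 3 → ℝ) :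
    vecMulVec (t • a) v = vecMulVec a (t • v) := by
  ext i j
  simp [vecMulVec_apply]
  ring

/-- Rank-one decomposition of a nonzero square-zero 3×3 matrix. -/
private lemma rank_one_decomp (A : Matrix (Fin 3) (Fin 3) ℝ) (hA : A ≠ 0)
    (hA2 : A * A = 0) : ∃ a b : Fin 3 → ℝ, a ≠ 0 ∧ b ≠ 0 ∧ A = vecMulVec a b := by
  set f := A.mulVecLin with hf
  have hle : LinearMap.range f ≤ LinearMap.ker f := by
    rintro y ⟨x, rfl⟩
    simp only [LinearMap.mem_ker, hf, Matrix.mulVecLin_apply, Matrix.mulVec_mulVec, hA2,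
      Matrix.zero_mulVec]
  -- a nonzero vector in the range
  obtain ⟨i₀, j₀, hij⟩ : ∃ i j, A i j ≠ 0 := by
    by_contra hc
    push_neg at hc
    exact hA (by ext i j; exact hc i j)
  set u : Fin 3 → ℝ := A *ᵥ Pi.single j₀ 1 with hu
  have hune : u ≠ 0 := by
    intro h
    have := congrFun h i₀
    simp [hu] at this
    exact hij this
  have humem : u ∈ LinearMap.range f := ⟨Pi.single j₀ 1, rfl⟩
  have hspan : (ℝ ∙ u) ≤ LinearMap.range f := by
    rwa [Submodule.span_singleton_le_iff_mem]
  -- dimension count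
  have hrk : Module.finrank ℝ (LinearMap.range f) + Module.finrank ℝ (LinearMap.ker f) = 3 := by
    have := LinearMap.finrank_range_add_finrank_ker f
    simpa [Module.finrank_fintype_fun_eq_card] using this
  have hmono : Module.finrank ℝ (LinearMap.range f) ≤ Module.finrank ℝ (LinearMap.ker f) :=
    Submodule.finrank_mono hle
  have hone : Module.finrank ℝ (LinearMap.range f) ≤ 1 := by omega
  have heq : (ℝ ∙ u) = LinearMap.range f := by
    apply Submodule.eq_of_le_of_finrank_le hspan
    rw [finrank_span_singleton hune]
    exact hone
  -- every column is a multiple of u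
  have hcol : ∀ j : Fin 3, ∃ c : ℝ, (A *ᵥ Pi.single j 1) = c • u := by
    intro j
    have : (A *ᵥ Pi.single j 1) ∈ (ℝ ∙ u) := heq ▸ ⟨Pi.single j 1, rfl⟩
    obtain ⟨c, hc⟩ := Submodule.mem_span_singleton.mp this
    exact ⟨c, hc.symm⟩
  choose b hb using hcol
  have hAeq : A = vecMulVec u b := by
    ext i j
    have := congrFun (hb j) i
    simp only [Matrix.mulVec_single, MulOpposite.op_one, one_smul, Matrix.col_apply, mul_one, Pi.smul_apply, smul_eq_mul] at this
    rw [vecMulVec_apply, this]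
    ring
  refine ⟨u, b, hune, ?_, hAeq⟩
  intro h
  apply hA
  rw [hAeq, h]
  ext i j
  simp [vecMulVec_apply]

/-- If `A` and `B` are non-zero real `3×3` matrices with
`A² = B² = AB = BA = 0`, then there are three non-zero vectors `a, b, c ∈ ℝ³`
(viewed as row vectors) such that either `A = aᵀb`, `B = aᵀc` with `b·a = 0`, `c·a = 0`,
or `A = aᵀc`, `B = bᵀc` with `c·a = 0`, `c·b = 0`. -/
theorem stmt_8 (A B : Matrix (Fin 3) (Fin 3) ℝ) (hA : A ≠ 0) (hB : B ≠ 0)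
    (hA2 : A * A = 0) (hB2 : B * B = 0) (hAB : A * B = 0) (hBA : B * A = 0) :
    ∃ a b c : Fin 3 → ℝ, a ≠ 0 ∧ b ≠ 0 ∧ c ≠ 0 ∧
      ((A = vecMulVec a b ∧ B = vecMulVec a c ∧ b ⬝ᵥ a = 0 ∧ c ⬝ᵥ a = 0) ∨
       (A = vecMulVec a c ∧ B = vecMulVec b c ∧ c ⬝ᵥ a = 0 ∧ c ⬝ᵥ b = 0)) := by
  obtain ⟨a, b, ha, hb, rfl⟩ := rank_one_decomp A hA hA2
  obtain ⟨u, v, hu, hv, rfl⟩ := rank_one_decomp B hB hB2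
  rw [vmv_mul] at hA2 hB2 hAB hBA
  have hba : b ⬝ᵥ a = 0 :=
    (smul_eq_zero.mp hA2).resolve_right (vmv_ne_zero ha hb)
  have hvu : v ⬝ᵥ u = 0 :=
    (smul_eq_zero.mp hB2).resolve_right (vmv_ne_zero hu hv)
  have hbu : b ⬝ᵥ u = 0 :=
    (smul_eq_zero.mp hAB).resolve_right (vmv_ne_zero ha hv)
  have hva : v ⬝ᵥ a = 0 :=
    (smul_eq_zero.mp hBA).resolve_right (vmv_ne_zero hu hb)
  by_cases hcase : ∃ t : ℝ, u = t • a
  · -- column spaces agree: first alternative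
    obtain ⟨t, rfl⟩ := hcase
    have ht : t ≠ 0 := by
      rintro rfl
      simp at hu
    refine ⟨a, b, t • v, ha, hb, smul_ne_zero ht hv, Or.inl ⟨rfl, ?_, hba, ?_⟩⟩
    · rw [vmv_smul_left]
    · rw [smul_dotProduct, hva, smul_zero]
  · -- a, u independent: show v is parallel to b
    have hw : cp a u ≠ 0 := by
      intro h
      exact hcase (cp_eq_zero_imp h ha)
    have hbw : cp b (cp a u) = 0 := by
      rw [cp_triple, hbu, hba]
      simp
    have hvw : cp v (cp a u) = 0 := by
      rw [cp_triple, hvu, hva]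
      simp
    obtain ⟨t₁, hw1⟩ := cp_eq_zero_imp hbw hb
    obtain ⟨t₂, hv2⟩ := cp_eq_zero_imp hvw hv
    have ht2 : t₂ ≠ 0 := by
      rintro rfl
      rw [zero_smul] at hv2
      exact hw hv2
    have h3 : t₂ • v = t₁ • b := hv2.symm.trans hw1
    have hvb : v = (t₁ / t₂) • b := by
      funext i
      have := congrFun h3 i
      simp only [Pi.smul_apply, smul_eq_mul] at this ⊢
      field_simp
      linarith
    have hs : t₁ / t₂ ≠ 0 := by
      intro h
      rw [h, zero_smul] at hvb
      exact hv hvb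
    refine ⟨a, (t₁ / t₂) • u, b, ha, smul_ne_zero hs hu, hb, Or.inr ⟨rfl, ?_, hba, ?_⟩⟩
    · rw [vmv_smul_left, ← hvb]
    · rw [dotProduct_smul, smul_eq_mul, hbu, mul_zero]
end

section
/- Let h : R^2 → R be continuous, let a, b ∈ R^3 be linearly independent vectors, and let c ∈ R^3 be a non-zero vector orthogonal to both a and b. Suppose there exists d ∈ R^3 such that h(x1 + a·m, x2 + b·m) = h(x1, x2) + d·m for all m ∈ Z^3 and all (x1, x2) ∈ R^2. Then there exist k1, k2 ∈ R such that d = k1 a + k2 b, and the function h̃(x1, x2) = h(x1, x2) − k1 x1 − k2 x2 is (a·m, b·m)-periodic for all m ∈ Z^3, i.e. h̃(x1 + a·m, x2 + b·m) = h̃(x1, x2). Moreover: if rank G(c) = 0 then h̃ is constant; if rank G(c) = 1 then there exist l1, l2 ∈ R and a continuous function ρ : T → R such that h̃(x1, x2) = ρ(l1 x1 + l2 x2) and l1 a + l2 b ∈ Z^3 generates G(c); if rank G(c) = 2 then c ∈ c' Z^3 for some real c' ≠ 0. -/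
open Matrix

set_option maxHeartbeats 1000000

noncomputable section


lemma gram_ne_zero {u v : Fin 3 → ℝ} (h : LinearIndependent ℝ ![u, v]) :
    (u ⬝ᵥ u) * (v ⬝ᵥ v) - (u ⬝ᵥ v) ^ 2 ≠ 0 := by
  intro hdet
  have hv : v ≠ 0 := by
    intro hv
    exact (h.ne_zero 1) (by simp [hv])
  have hvv : v ⬝ᵥ v ≠ 0 := fun h0 => hv (dotProduct_self_eq_zero.mp h0)
  set w : Fin 3 → ℝ := (v ⬝ᵥ v) • u - (u ⬝ᵥ v) • v with hw
  have hww : w ⬝ᵥ w = 0 := by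
    have : w ⬝ᵥ w = (v ⬝ᵥ v) * ((u ⬝ᵥ u) * (v ⬝ᵥ v) - (u ⬝ᵥ v) ^ 2) := by
      simp only [hw, sub_dotProduct, dotProduct_sub, smul_dotProduct, dotProduct_smul,
        smul_eq_mul]
      rw [dotProduct_comm v u]
      ring
    rw [this, hdet, mul_zero]
  have hw0 : w = 0 := dotProduct_self_eq_zero.mp hww
  have hsum : (v ⬝ᵥ v) • u + (-(u ⬝ᵥ v)) • v = 0 := by
    rw [neg_smul, ← sub_eq_add_neg, ← hw, hw0]
  have := Fintype.linearIndependent_iff.mp h ![v ⬝ᵥ v, -(u ⬝ᵥ v)] (by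
    simpa [Fin.sum_univ_two] using hsum) 0
  apply hvv
  simpa [dotProduct, Fin.sum_univ_three] using this

/-- Solve homogeneous 2x2 system with nonzero determinant. -/
lemma sys2 {g11 g12 g22 s t : ℝ} (hdet : g11 * g22 - g12 ^ 2 ≠ 0)
    (h1 : s * g11 + t * g12 = 0) (h2 : s * g12 + t * g22 = 0) : s = 0 ∧ t = 0 := by
  constructor
  · have : s * (g11 * g22 - g12 ^ 2) = 0 := by linear_combination g22 * h1 - g12 * h2
    rcases mul_eq_zero.mp this with h | h
    · exact h
    · exact absurd h hdet
  · have : t * (g11 * g22 - g12 ^ 2) = 0 := by linear_combination g11 * h2 - g12 * h1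
    rcases mul_eq_zero.mp this with h | h
    · exact h
    · exact absurd h hdet

/-- Spanning: if u, v linearly independent, w orthogonal to both and nonzero, then
every vector is a combination. -/
lemma span3 {u v w : Fin 3 → ℝ} (h : LinearIndependent ℝ ![u, v])
    (hwu : w ⬝ᵥ u = 0) (hwv : w ⬝ᵥ v = 0) (hw : w ≠ 0) :
    ∀ z : Fin 3 → ℝ, ∃ p q r : ℝ, z = p • u + q • v + r • w := by
  have hww : w ⬝ᵥ w ≠ 0 := fun h0 => hw (dotProduct_self_eq_zero.mp h0)
  have hli : LinearIndependent ℝ ![u, v, w] := by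
    rw [Fintype.linearIndependent_iff]
    intro g hg
    rw [Fin.sum_univ_three] at hg
    simp only [Matrix.cons_val_zero, Matrix.cons_val_one, Matrix.head_cons,
      Matrix.cons_val_two, Matrix.tail_cons] at hg
    have hgw : g 2 = 0 := by
      have := congrArg (fun z => w ⬝ᵥ z) hg
      simp only [dotProduct_add, dotProduct_smul, smul_eq_mul, dotProduct_zero,
        hwu, hwv] at this
      rcases mul_eq_zero.mp (by linarith : g 2 * (w ⬝ᵥ w) = 0) with h' | h'
      · exact h'
      · exact absurd h' hww
    have huv : g 0 • u + g 1 • v = 0 := by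
      rw [hgw, zero_smul, add_zero] at hg; exact hg
    have := Fintype.linearIndependent_iff.mp h ![g 0, g 1] (by
      simpa [Fin.sum_univ_two] using huv)
    intro i
    fin_cases i
    · exact this 0
    · exact this 1
    · exact hgw
  have hcard : Fintype.card (Fin 3) = Module.finrank ℝ (Fin 3 → ℝ) := by simp
  let B := basisOfLinearIndependentOfCardEqFinrank hli hcard
  intro z
  have hB : ⇑B = ![u, v, w] := coe_basisOfLinearIndependentOfCardEqFinrank hli hcard
  have := B.sum_repr z
  rw [Fin.sum_univ_three] at this
  have key : z = B.repr z 0 • u + B.repr z 1 • v + B.repr z 2 • w := by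
    conv_lhs => rw [← this]
    rw [congrFun hB 0, congrFun hB 1, congrFun hB 2]
    simp
  exact ⟨_, _, _, key⟩

/-- A closed subgroup of ℝ² with nonzero elements arbitrarily close to 0 contains a line. -/
lemma line_of_nondiscrete (H : AddSubgroup (ℝ × ℝ)) (hcl : IsClosed (H : Set (ℝ × ℝ)))
    (hnd : ∀ ε > 0, ∃ v : ℝ × ℝ, v ∈ H ∧ v ≠ 0 ∧ ‖v‖ < ε) :
    ∃ w : ℝ × ℝ, w ≠ 0 ∧ ∀ t : ℝ, t • w ∈ H := by
  -- choose sequence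
  have hseq : ∀ n : ℕ, ∃ v : ℝ × ℝ, v ∈ H ∧ v ≠ 0 ∧ ‖v‖ < 1 / (n + 1) := fun n =>
    hnd (1 / (n + 1)) (by positivity)
  choose v hvH hv0 hvn using hseq
  have hnorm : ∀ n, ‖v n‖ ≠ 0 := fun n => norm_ne_zero_iff.mpr (hv0 n)
  set u : ℕ → ℝ × ℝ := fun n => ‖v n‖⁻¹ • v n with hu
  have husphere : ∀ n, u n ∈ Metric.sphere (0 : ℝ × ℝ) 1 := by
    intro n
    simp [hu, norm_smul, abs_inv, inv_mul_cancel₀ (hnorm n), abs_of_nonneg (norm_nonneg _)]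
  obtain ⟨w, hwsph, φ, hφmono, hφlim⟩ :=
    (isCompact_sphere (0 : ℝ × ℝ) 1).tendsto_subseq husphere
  have hw0 : w ≠ 0 := by
    intro hw
    rw [hw] at hwsph
    simp at hwsph
  refine ⟨w, hw0, fun t => ?_⟩
  -- t • w is limit of ⌊t/‖v (φ n)‖⌋ • v (φ n)
  have hvlim : Filter.Tendsto (fun n => ‖v (φ n)‖) Filter.atTop (nhds 0) := by
    have h1 : Filter.Tendsto (fun n : ℕ => 1 / ((n : ℝ) + 1)) Filter.atTop (nhds 0) :=
      tendsto_one_div_add_atTop_nhds_zero_nat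
    apply squeeze_zero (fun n => norm_nonneg _) (g := fun n : ℕ => 1 / ((n : ℝ) + 1)) ?_ h1
    intro n
    refine (hvn (φ n)).le.trans ?_
    have : (n : ℝ) + 1 ≤ (φ n : ℝ) + 1 := by
      have h := (hφmono.le_apply : n ≤ φ n)
      have := (Nat.cast_le.mpr h : (n:ℝ) ≤ φ n); linarith
    apply one_div_le_one_div_of_le (by positivity) this
  have hklim : Filter.Tendsto (fun n => (⌊t / ‖v (φ n)‖⌋ : ℝ) * ‖v (φ n)‖)
      Filter.atTop (nhds t) := by
    rw [← tendsto_sub_nhds_zero_iff]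
    apply squeeze_zero_norm ?_ hvlim
    intro n
    have hpos : (0:ℝ) < ‖v (φ n)‖ := lt_of_le_of_ne (norm_nonneg _) (Ne.symm (hnorm (φ n)))
    have h1 := Int.sub_one_lt_floor (t / ‖v (φ n)‖)
    have h2 := Int.floor_le (t / ‖v (φ n)‖)
    have e : t / ‖v (φ n)‖ * ‖v (φ n)‖ = t := div_mul_cancel₀ t hpos.ne'
    have hA : (⌊t / ‖v (φ n)‖⌋ : ℝ) * ‖v (φ n)‖ ≤ t := by nlinarith
    have hB : t - ‖v (φ n)‖ < (⌊t / ‖v (φ n)‖⌋ : ℝ) * ‖v (φ n)‖ := by nlinarith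
    rw [Real.norm_eq_abs, abs_le]
    exact ⟨by linarith, by linarith⟩
  have hmem : ∀ n, (⌊t / ‖v (φ n)‖⌋ : ℤ) • v (φ n) ∈ H := fun n =>
    AddSubgroup.zsmul_mem H (hvH (φ n)) _
  have hlim2 : Filter.Tendsto (fun n => (⌊t / ‖v (φ n)‖⌋ : ℤ) • v (φ n))
      Filter.atTop (nhds (t • w)) := by
    have heq : ∀ n, (⌊t / ‖v (φ n)‖⌋ : ℤ) • v (φ n)
        = ((⌊t / ‖v (φ n)‖⌋ : ℝ) * ‖v (φ n)‖) • (u ∘ φ) n := by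
      intro n
      simp only [hu, Function.comp_apply, smul_smul, ← Int.cast_smul_eq_zsmul ℝ]
      rw [mul_inv_cancel_right₀ (hnorm (φ n))]
    simp only [heq]
    exact hklim.smul hφlim
  exact hcl.mem_of_tendsto hlim2 (Filter.Eventually.of_forall hmem)

lemma dense1 (α β : ℝ)
    (hrel : ∀ p q r : ℤ, p * α + q * β + r = 0 → p = 0 ∧ q = 0 ∧ r = 0) :
    ∀ s ε : ℝ, 0 < ε → ∃ k l : ℤ, |k * α + l - s| < ε := by
  set S : AddSubgroup ℝ :=
    { carrier := {x | ∃ k l : ℤ, x = k * α + l}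
      zero_mem' := ⟨0, 0, by simp⟩
      add_mem' := by
        rintro x y ⟨k, l, rfl⟩ ⟨k', l', rfl⟩
        exact ⟨k + k', l + l', by push_cast; ring⟩
      neg_mem' := by
        rintro x ⟨k, l, rfl⟩
        exact ⟨-k, -l, by push_cast; ring⟩ } with hS
  have hd : Dense (S : Set ℝ) := by
    rcases S.dense_or_cyclic with hd | ⟨g, hg⟩
    · exact hd
    · exfalso
      have hα : α ∈ S := ⟨1, 0, by simp⟩
      have h1 : (1 : ℝ) ∈ S := ⟨0, 1, by simp⟩
      rw [hg] at hα h1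
      obtain ⟨n, hn⟩ := AddSubgroup.mem_closure_singleton.mp hα
      obtain ⟨n₀, hn₀⟩ := AddSubgroup.mem_closure_singleton.mp h1
      have hn₀0 : n₀ ≠ 0 := by
        rintro rfl; simp at hn₀
      have : (n₀ : ℝ) * α + (0 : ℤ) * β + (-n : ℤ) = 0 := by
        push_cast
        have : (n₀ : ℝ) * (n • g) = n * (n₀ • g) := by
          simp only [zsmul_eq_mul]; ring
        rw [hn, hn₀] at this
        rw [this]; ring
      exact hn₀0 (hrel n₀ 0 (-n) this).1
  intro s ε hε
  obtain ⟨x, hxS, hx⟩ := Metric.mem_closure_iff.mp (hd s) ε hε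
  obtain ⟨k, l, rfl⟩ := hxS
  exact ⟨k, l, by rw [Real.dist_eq, abs_sub_comm] at hx; exact hx⟩

lemma kron2 (α β : ℝ)
    (hrel : ∀ p q r : ℤ, p * α + q * β + r = 0 → p = 0 ∧ q = 0 ∧ r = 0)
    (H : AddSubgroup (ℝ × ℝ)) (hcl : IsClosed (H : Set (ℝ × ℝ)))
    (h1 : ((1:ℝ), (0:ℝ)) ∈ H) (h2 : ((0:ℝ), (1:ℝ)) ∈ H) (h3 : (α, β) ∈ H) :
    ∀ v : ℝ × ℝ, v ∈ H := by
  have hmem : ∀ k l m : ℤ, ((k * α + l : ℝ), (k * β + m : ℝ)) ∈ H := by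
    intro k l m
    have : ((k * α + l : ℝ), (k * β + m : ℝ))
        = k • ((α, β) : ℝ × ℝ) + l • ((1:ℝ), (0:ℝ)) + m • ((0:ℝ), (1:ℝ)) := by
      refine Prod.ext_iff.mpr ⟨?_, ?_⟩ <;> simp [zsmul_eq_mul] <;> try ring
    rw [this]
    exact H.add_mem (H.add_mem (H.zsmul_mem h3 k) (H.zsmul_mem h1 l)) (H.zsmul_mem h2 m)
  set V : AddSubgroup ℝ :=
    { carrier := {y | ((0:ℝ), y) ∈ H}
      zero_mem' := by exact H.zero_mem
      add_mem' := by
        intro y1 y2 hy1 hy2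
        have := H.add_mem hy1 hy2
        simpa using this
      neg_mem' := by
        intro y hy
        have := H.neg_mem hy
        simpa using this } with hV
  have hVmem : ∀ y : ℝ, y ∈ V ↔ ((0:ℝ), y) ∈ H := fun y => Iff.rfl
  have hVcl : IsClosed (V : Set ℝ) := by
    have : (V : Set ℝ) = (fun y : ℝ => ((0:ℝ), y)) ⁻¹' (H : Set (ℝ × ℝ)) := rfl
    rw [this]
    exact hcl.preimage (by continuity)
  have h1V : (1:ℝ) ∈ V := h2
  rcases V.dense_or_cyclic with hVd | ⟨g, hg⟩
  · -- V dense hence all of ℝ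
    have hVall : ∀ y : ℝ, y ∈ V := by
      intro y
      have := (hVcl.closure_eq ▸ hVd.closure_eq)
      rw [← SetLike.mem_coe, this]; trivial
    rintro ⟨s, t⟩
    have : (s, t) ∈ closure (H : Set (ℝ × ℝ)) := by
      rw [Metric.mem_closure_iff]
      intro ε hε
      obtain ⟨k, l, hkl⟩ := dense1 α β hrel s ε hε
      refine ⟨((k * α + l : ℝ), t), ?_, ?_⟩
      · have : ((k * α + l : ℝ), t) = ((k * α + l : ℝ), (k * β + 0 : ℝ))
            + ((0:ℝ), t - (k * β + 0)) := by
          simp [Prod.ext_iff]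
        rw [this]
        exact H.add_mem (by exact_mod_cast hmem k l 0) (hVall _)
      · rw [Prod.dist_eq]
        simp only [dist_self]
        apply max_lt _ hε
        rw [Real.dist_eq, abs_sub_comm]; exact hkl
    rwa [hcl.closure_eq] at this
  · -- V cyclic: derive contradiction
    exfalso
    obtain ⟨n₀, hn₀⟩ := AddSubgroup.mem_closure_singleton.mp (hg ▸ h1V)
    have hg0 : g ≠ 0 := by
      rintro rfl; simp at hn₀
    have hn₀0 : n₀ ≠ 0 := by
      rintro rfl; simp at hn₀
    set a : ℝ := |g| with ha
    have ha0 : 0 < a := abs_pos.mpr hg0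
    have haV : a ∈ V := by
      rcases abs_choice g with h | h
      · rw [ha, h]; exact hg ▸ AddSubgroup.mem_closure_singleton.mpr ⟨1, one_smul _ _⟩
      · rw [ha, h]; exact V.neg_mem (hg ▸ AddSubgroup.mem_closure_singleton.mpr ⟨1, one_smul _ _⟩)
    have hVa : ∀ y ∈ V, ∃ n : ℤ, y = n * a := by
      intro y hy
      obtain ⟨n, hn⟩ := AddSubgroup.mem_closure_singleton.mp (hg ▸ hy)
      rcases abs_choice g with h | h
      · exact ⟨n, by rw [ha, h, ← hn, zsmul_eq_mul]⟩
      · exact ⟨-n, by rw [ha, h, ← hn, zsmul_eq_mul]; push_cast; ring⟩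
    have hnd : ∀ ε > 0, ∃ v : ℝ × ℝ, v ∈ H ∧ v ≠ 0 ∧ ‖v‖ < ε := by
      have hpt : ∀ n : ℕ, ∃ p : ℝ × ℝ, p ∈ H ∧ 0 < p.1 ∧ p.1 < 1/((n:ℝ)+1)
          ∧ 0 ≤ p.2 ∧ p.2 ≤ a := by
        intro n
        set s : ℝ := (1/((n:ℝ)+2) + 1/((n:ℝ)+1))/2 with hs
        set ε' : ℝ := (1/((n:ℝ)+1) - 1/((n:ℝ)+2))/2 with hε'def
        have hlt : 1/((n:ℝ)+2) < 1/((n:ℝ)+1) := by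
          apply one_div_lt_one_div_of_lt <;> [positivity; linarith]
        have hε' : 0 < ε' := by rw [hε'def]; linarith
        obtain ⟨k, l, hkl⟩ := dense1 α β hrel s ε' hε'
        rw [abs_lt] at hkl
        have hx1 : 0 < (k:ℝ)*α+l := by
          have h2 : (0:ℝ) < 1/((n:ℝ)+2) := by positivity
          rw [hs] at hkl; rw [hε'def] at hkl; nlinarith [hkl.1]
        have hx2 : (k:ℝ)*α+l < 1/((n:ℝ)+1) := by
          rw [hs] at hkl; rw [hε'def] at hkl; nlinarith [hkl.2]
        set mfl : ℤ := ⌊((k:ℝ)*β) / a⌋ with hmfl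
        have hy1 : 0 ≤ (k:ℝ)*β - mfl*a := by
          have := Int.floor_le (((k:ℝ)*β) / a)
          rw [← hmfl] at this
          have := mul_le_mul_of_nonneg_right this ha0.le
          rw [div_mul_cancel₀ _ ha0.ne'] at this
          linarith
        have hy2 : (k:ℝ)*β - mfl*a ≤ a := by
          have := (Int.lt_floor_add_one (((k:ℝ)*β) / a)).le
          rw [← hmfl] at this
          have := mul_le_mul_of_nonneg_right this ha0.le
          rw [add_mul, div_mul_cancel₀ _ ha0.ne', one_mul] at this
          linarith
        refine ⟨((k:ℝ)*α+l, (k:ℝ)*β - mfl*a), ?_, hx1, hx2, hy1, hy2⟩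
        have hsub := H.sub_mem (hmem k l 0) (H.zsmul_mem (haV : ((0:ℝ), a) ∈ H) mfl)
        have heq : ((k:ℝ)*α+l, (k:ℝ)*β + (0:ℤ)) - mfl • (((0:ℝ), a) : ℝ × ℝ)
            = (((k:ℝ)*α+l, (k:ℝ)*β - mfl*a) : ℝ × ℝ) := by
          refine Prod.ext_iff.mpr ⟨?_, ?_⟩ <;> simp [zsmul_eq_mul]
        rw [heq] at hsub
        exact hsub
      choose p hpH hp1 hp2 hp3 hp4 using hpt
      obtain ⟨ystar, hystar, σ, hσ, hylim⟩ :=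
        (isCompact_Icc (a := (0:ℝ)) (b := a)).tendsto_subseq
          (fun n => Set.mem_Icc.mpr ⟨hp3 n, hp4 n⟩)
      have hxlim : Filter.Tendsto (fun n => (p (σ n)).1) Filter.atTop (nhds 0) := by
        apply squeeze_zero (fun n => (hp1 (σ n)).le)
          (g := fun n : ℕ => 1/((n:ℝ)+1))
        · intro n
          refine (hp2 (σ n)).le.trans ?_
          have h := (hσ.le_apply : n ≤ σ n)
          have : (n : ℝ) + 1 ≤ (σ n : ℝ) + 1 := by
            have : (n:ℝ) ≤ σ n := by exact_mod_cast h
            linarith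
          exact one_div_le_one_div_of_le (by positivity) this
        · exact tendsto_one_div_add_atTop_nhds_zero_nat
      have hplim : Filter.Tendsto (fun n => p (σ n)) Filter.atTop (nhds ((0:ℝ), ystar)) := by
        have := hxlim.prodMk_nhds hylim
        simpa using this
      have hlimH : ((0:ℝ), ystar) ∈ H :=
        hcl.mem_of_tendsto hplim (Filter.Eventually.of_forall (fun n => hpH (σ n)))
      intro ε hε
      have hqlim : Filter.Tendsto (fun n => p (σ n) - ((0:ℝ), ystar)) Filter.atTop (nhds 0) := by
        simpa using hplim.sub (tendsto_const_nhds (x := ((0:ℝ), ystar)))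
      have := (Metric.tendsto_atTop.mp (hqlim.norm.sub (tendsto_const_nhds (x := (0:ℝ))))) -- unused fallback
      obtain ⟨N, hN⟩ := Metric.tendsto_atTop.mp hqlim ε hε
      refine ⟨p (σ N) - ((0:ℝ), ystar), H.sub_mem (hpH (σ N)) hlimH, ?_, ?_⟩
      · intro h0
        have : (p (σ N)).1 = 0 := by
          have := congrArg Prod.fst h0
          simpa using this
        exact (hp1 (σ N)).ne' this
      · have := hN N le_rfl
        rwa [dist_zero_right] at this
    obtain ⟨w, hw0, hwH⟩ := line_of_nondiscrete H hcl hnd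
    have hw1 : w.1 ≠ 0 := by
      intro hw1
      have hw2 : w.2 ≠ 0 := by
        intro h2'
        exact hw0 (Prod.ext hw1 h2')
      have hmemV : ((0:ℝ), a/2) ∈ H := by
        have := hwH ((a/2)/w.2)
        have heq : ((a/2)/w.2) • w = (((0:ℝ), a/2) : ℝ × ℝ) := by
          refine Prod.ext_iff.mpr ⟨?_, ?_⟩
          · simp [hw1]
          · simp [div_mul_cancel₀ _ hw2]
        rwa [heq] at this
      obtain ⟨n, hn⟩ := hVa (a/2) hmemV
      have hcase : (1:ℝ) ≤ (n:ℝ) ∨ (n:ℝ) ≤ 0 := by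
        rcases Int.lt_or_le 0 n with h | h
        · left; exact_mod_cast h
        · right; exact_mod_cast h
      rcases hcase with h | h <;> nlinarith
    set γ : ℝ := w.2 / w.1 with hγ
    have hgraph : ∀ x y : ℝ, (x, y) ∈ H → ∃ n : ℤ, y - γ * x = n * a := by
      intro x y hxy
      have hmem' := H.sub_mem hxy (hwH (x / w.1))
      have heq : ((x, y) : ℝ × ℝ) - (x / w.1) • w = (((0:ℝ), y - γ * x) : ℝ × ℝ) := by
        refine Prod.ext_iff.mpr ⟨?_, ?_⟩
        · simp [div_mul_cancel₀ _ hw1]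
        · simp [hγ]; ring
      rw [heq] at hmem'
      obtain ⟨n, hn⟩ := hVa _ hmem'
      exact ⟨n, hn⟩
    obtain ⟨k₁, hk₁⟩ := hgraph 1 0 h1
    obtain ⟨k₂, hk₂⟩ := hgraph α β h3
    obtain ⟨n₁, hn₁⟩ : ∃ n₁ : ℤ, (n₁:ℝ) * a = 1 := by
      rcases abs_choice g with hh | hh
      · exact ⟨n₀, by rw [ha, hh]; rw [← zsmul_eq_mul]; exact hn₀⟩
      · refine ⟨-n₀, ?_⟩
        rw [ha, hh]
        push_cast
        have : (n₀:ℝ) * g = 1 := by rw [← zsmul_eq_mul]; exact hn₀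
        linarith [this]
    have hn₁0 : n₁ ≠ 0 := by
      rintro rfl; simp at hn₁
    have hrel' : (k₁:ℝ) * α + (n₁:ℝ) * β + ((-k₂ : ℤ):ℝ) = 0 := by
      push_cast
      linear_combination (n₁:ℝ) * hk₂ - ((n₁:ℝ)*α) * hk₁ + ((k₂:ℝ) - (k₁:ℝ)*α) * hn₁
    exact hn₁0 (hrel k₁ n₁ (-k₂) hrel').2.1

lemma li_pair {u v : Fin 3 → ℝ} {i j : Fin 3} (h1 : u i ≠ 0) (h2 : v i = 0)
    (h3 : u j = 0) (h4 : v j ≠ 0) : LinearIndependent ℝ ![u, v] := by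
  rw [Fintype.linearIndependent_iff]
  intro g hg
  rw [Fin.sum_univ_two] at hg
  simp only [Matrix.cons_val_zero, Matrix.cons_val_one, Matrix.head_cons] at hg
  have ei := congrFun hg i
  have ej := congrFun hg j
  simp only [Pi.add_apply, Pi.smul_apply, smul_eq_mul, Pi.zero_apply, h2, h3,
    mul_zero, add_zero, zero_add] at ei ej
  have hg0 : g 0 = 0 := by
    rcases mul_eq_zero.mp ei with h | h
    · exact h
    · exact absurd h h1
  have hg1 : g 1 = 0 := by
    rcases mul_eq_zero.mp ej with h | h
    · exact h
    · exact absurd h h4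
  intro k
  fin_cases k
  · exact hg0
  · exact hg1

/-- two independent integer vectors orthogonal to a nonzero integer vector -/
lemma perp2 (n : Fin 3 → ℤ) (hn : n ≠ 0) :
    ∃ w₁ w₂ : Fin 3 → ℤ, n ⬝ᵥ w₁ = 0 ∧ n ⬝ᵥ w₂ = 0 ∧
      LinearIndependent ℝ ![fun i => ((w₁ i : ℤ) : ℝ), fun i => ((w₂ i : ℤ) : ℝ)] := by
  have hex : n 0 ≠ 0 ∨ n 1 ≠ 0 ∨ n 2 ≠ 0 := by
    by_contra hc
    push_neg at hc
    exact hn (funext fun i => by fin_cases i <;> simp [hc.1, hc.2.1, hc.2.2])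
  have hcast : ∀ k : ℤ, k ≠ 0 → ((k : ℝ) ≠ 0) := fun k hk => Int.cast_ne_zero.mpr hk
  rcases hex with h | h | h
  · refine ⟨![n 1, -n 0, 0], ![n 2, 0, -n 0], ?_, ?_, ?_⟩
    · simp [dotProduct, Fin.sum_univ_three]; ring
    · simp [dotProduct, Fin.sum_univ_three]; ring
    · exact li_pair (u := fun i => ((![n 1, -n 0, 0] : Fin 3 → ℤ) i : ℝ)) (i := 1) (j := 2)
        (by simpa using hcast _ (neg_ne_zero.mpr h)) (by simp)
        (by simp) (by simpa using hcast _ (neg_ne_zero.mpr h))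
  · refine ⟨![-n 1, n 0, 0], ![0, n 2, -n 1], ?_, ?_, ?_⟩
    · simp [dotProduct, Fin.sum_univ_three]; ring
    · simp [dotProduct, Fin.sum_univ_three]; ring
    · exact li_pair (i := 0) (j := 2)
        (by simpa using hcast _ (neg_ne_zero.mpr h)) (by simp)
        (by simp) (by simpa using hcast _ (neg_ne_zero.mpr h))
  · refine ⟨![-n 2, 0, n 0], ![0, -n 2, n 1], ?_, ?_, ?_⟩
    · simp [dotProduct, Fin.sum_univ_three]; ring
    · simp [dotProduct, Fin.sum_univ_three]; ring
    · exact li_pair (i := 0) (j := 1)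
        (by simpa using hcast _ (neg_ne_zero.mpr h)) (by simp)
        (by simp) (by simpa using hcast _ (neg_ne_zero.mpr h))

lemma bezout3 (m : Fin 3 → ℤ) :
    ∃ m₁ : Fin 3 → ℤ, m ⬝ᵥ m₁ = (Int.gcd (Int.gcd (m 0) (m 1)) (m 2) : ℤ) := by
  set g1 := Int.gcd (m 0) (m 1) with hg1
  have h1 : (g1 : ℤ) = m 0 * Int.gcdA (m 0) (m 1) + m 1 * Int.gcdB (m 0) (m 1) :=
    Int.gcd_eq_gcd_ab (m 0) (m 1)
  have h2 : (Int.gcd (g1 : ℤ) (m 2) : ℤ)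
      = (g1 : ℤ) * Int.gcdA (g1 : ℤ) (m 2) + m 2 * Int.gcdB (g1 : ℤ) (m 2) :=
    Int.gcd_eq_gcd_ab (g1 : ℤ) (m 2)
  refine ⟨![Int.gcdA (m 0) (m 1) * Int.gcdA (g1 : ℤ) (m 2),
           Int.gcdB (m 0) (m 1) * Int.gcdA (g1 : ℤ) (m 2),
           Int.gcdB (g1 : ℤ) (m 2)], ?_⟩
  have : Int.gcd (Int.gcd (m 0) (m 1)) (m 2) = Int.gcd (g1 : ℤ) (m 2) := by
    simp [hg1, Int.gcd]
  rw [this]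
  simp only [dotProduct, Fin.sum_univ_three]
  simp only [Matrix.cons_val_zero, Matrix.cons_val_one, Matrix.head_cons,
    Matrix.cons_val_two, Matrix.tail_cons]
  rw [h2, h1]
  ring

lemma abs_dot_le (v t : Fin 3 → ℝ) (C : ℝ) (hC : ∀ i, |t i| ≤ C) :
    |v ⬝ᵥ t| ≤ (|v 0| + |v 1| + |v 2|) * C := by
  have hC0 : 0 ≤ C := le_trans (abs_nonneg _) (hC 0)
  simp only [dotProduct, Fin.sum_univ_three]
  calc |v 0 * t 0 + v 1 * t 1 + v 2 * t 2|
      ≤ |v 0 * t 0| + |v 1 * t 1| + |v 2 * t 2| := by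
        exact (abs_add_le _ _).trans (by gcongr; exact abs_add_le _ _)
    _ ≤ |v 0| * C + |v 1| * C + |v 2| * C := by
        rw [abs_mul, abs_mul, abs_mul]
        gcongr <;> exact hC _
    _ = (|v 0| + |v 1| + |v 2|) * C := by ring

lemma dc_zero (h : ℝ → ℝ → ℝ) (hcont : Continuous (Function.uncurry h))
    (a b c d : Fin 3 → ℝ) (hc : c ≠ 0) (hca : c ⬝ᵥ a = 0) (hcb : c ⬝ᵥ b = 0)
    (hper : ∀ (m : Fin 3 → ℤ) (x₁ x₂ : ℝ),
      h (x₁ + a ⬝ᵥ fun i => (m i : ℝ)) (x₂ + b ⬝ᵥ fun i => (m i : ℝ))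
        = h x₁ x₂ + d ⬝ᵥ fun i => (m i : ℝ)) :
    c ⬝ᵥ d = 0 := by
  have hcc : c ⬝ᵥ c ≠ 0 := fun h0 => hc (dotProduct_self_eq_zero.mp h0)
  set u : Fin 3 → ℝ := (c ⬝ᵥ c)⁻¹ • c with hu
  have hau : a ⬝ᵥ u = 0 := by
    rw [hu, dotProduct_smul, smul_eq_mul, dotProduct_comm a c, hca, mul_zero]
  have hbu : b ⬝ᵥ u = 0 := by
    rw [hu, dotProduct_smul, smul_eq_mul, dotProduct_comm b c, hcb, mul_zero]
  set m : ℕ → Fin 3 → ℤ := fun n i => round ((n : ℝ) * u i) with hm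
  set Ca : ℝ := (|a 0| + |a 1| + |a 2|) * (1/2) with hCa
  set Cb : ℝ := (|b 0| + |b 1| + |b 2|) * (1/2) with hCb
  set Cd : ℝ := (|d 0| + |d 1| + |d 2|) * (1/2) with hCd
  have hbound : ∀ (n : ℕ) (i : Fin 3), |(m n i : ℝ) - (n : ℝ) * u i| ≤ 1/2 := by
    intro n i
    rw [hm, abs_sub_comm]
    exact abs_sub_round _
  have hdiff : ∀ (v : Fin 3 → ℝ), v ⬝ᵥ u = 0 → ∀ n : ℕ,
      |v ⬝ᵥ (fun i => ((m n i : ℤ) : ℝ))| ≤ (|v 0| + |v 1| + |v 2|) * (1/2) := by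
    intro v hv n
    have key : v ⬝ᵥ (fun i => ((m n i : ℤ) : ℝ))
        = v ⬝ᵥ (fun i => ((m n i : ℝ) - (n : ℝ) * u i)) + (n : ℝ) * (v ⬝ᵥ u) := by
      simp only [dotProduct, Fin.sum_univ_three]
      ring
    rw [key, hv, mul_zero, add_zero]
    exact abs_dot_le v _ _ (fun i => hbound n i)
  -- bound on h over compact box
  obtain ⟨M, hM⟩ := (IsCompact.exists_bound_of_continuousOn
    ((isCompact_Icc (a := -Ca) (b := Ca)).prod (isCompact_Icc (a := -Cb) (b := Cb))))
    hcont.continuousOn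
  have hdm : ∀ n : ℕ, |d ⬝ᵥ (fun i => ((m n i : ℤ) : ℝ))| ≤ M + |h 0 0| := by
    intro n
    have hx := hdiff a hau n
    have hy := hdiff b hbu n
    have hmem : ((a ⬝ᵥ fun i => ((m n i : ℤ) : ℝ)), (b ⬝ᵥ fun i => ((m n i : ℤ) : ℝ)))
        ∈ Set.Icc (-Ca) Ca ×ˢ Set.Icc (-Cb) Cb := by
      constructor
      · rw [← hCa] at hx; constructor <;> [linarith [abs_le.mp hx]; exact (abs_le.mp hx).2]
      · rw [← hCb] at hy; constructor <;> [linarith [abs_le.mp hy]; exact (abs_le.mp hy).2]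
    have hper' := hper (m n) 0 0
    rw [zero_add, zero_add] at hper'
    have hval := hM _ hmem
    rw [Function.uncurry_apply_pair, hper'] at hval
    have : |h 0 0 + d ⬝ᵥ (fun i => ((m n i : ℤ) : ℝ))| ≤ M := by
      simpa [Real.norm_eq_abs] using hval
    calc |d ⬝ᵥ (fun i => ((m n i : ℤ) : ℝ))|
        = |(h 0 0 + d ⬝ᵥ (fun i => ((m n i : ℤ) : ℝ))) - h 0 0| := by ring_nf
      _ ≤ |h 0 0 + d ⬝ᵥ (fun i => ((m n i : ℤ) : ℝ))| + |h 0 0| := abs_sub _ _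
      _ ≤ M + |h 0 0| := by linarith
  -- conclude d ⬝ᵥ u = 0
  have hdu : d ⬝ᵥ u = 0 := by
    by_contra hdu
    have habs : 0 < |d ⬝ᵥ u| := abs_pos.mpr hdu
    obtain ⟨n, hn⟩ := exists_nat_gt ((M + |h 0 0| + Cd) / |d ⬝ᵥ u|)
    have key : d ⬝ᵥ (fun i => ((m n i : ℤ) : ℝ))
        = d ⬝ᵥ (fun i => ((m n i : ℝ) - (n : ℝ) * u i)) + (n : ℝ) * (d ⬝ᵥ u) := by
      simp only [dotProduct, Fin.sum_univ_three]; ring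
    have h1 := hdm n
    have h2 : |d ⬝ᵥ (fun i => ((m n i : ℝ) - (n : ℝ) * u i))| ≤ Cd :=
      abs_dot_le d _ _ (fun i => hbound n i)
    have h3 : (n : ℝ) * |d ⬝ᵥ u| ≤ M + |h 0 0| + Cd := by
      have : (n : ℝ) * |d ⬝ᵥ u| = |(n : ℝ) * (d ⬝ᵥ u)| := by
        rw [abs_mul, Nat.abs_cast]
      rw [this]
      calc |(n : ℝ) * (d ⬝ᵥ u)|
          = |d ⬝ᵥ (fun i => ((m n i : ℤ) : ℝ)) - d ⬝ᵥ (fun i => ((m n i : ℝ) - (n : ℝ) * u i))| := by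
            congr 1
            rw [key]; ring
        _ ≤ |d ⬝ᵥ (fun i => ((m n i : ℤ) : ℝ))| + |d ⬝ᵥ (fun i => ((m n i : ℝ) - (n : ℝ) * u i))| :=
            abs_sub _ _
        _ ≤ M + |h 0 0| + Cd := by linarith
    have := (div_lt_iff₀ habs).mp hn
    linarith
  rw [hu, dotProduct_smul, smul_eq_mul, dotProduct_comm] at hdu
  rcases mul_eq_zero.mp hdu with h0 | h0
  · exact absurd h0 (inv_ne_zero hcc)
  · rw [dotProduct_comm]; exact h0


/-- Let `h : ℝ² → ℝ` be continuous, let `a, b ∈ ℝ³` be linearly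
independent, and let `c ∈ ℝ³` be non-zero and orthogonal to `a` and `b`.  Suppose
`h(x₁ + a·m, x₂ + b·m) = h(x₁,x₂) + d·m` for all `m ∈ ℤ³`.  Then `d = k₁a + k₂b` for
some reals `k₁, k₂`, the function `h̃(x₁,x₂) = h(x₁,x₂) − k₁x₁ − k₂x₂` is
`(a·m, b·m)`-periodic for all `m ∈ ℤ³`, and:
if `rank G(c) = 0` then `h̃` is constant; if `rank G(c) = 1` then
`h̃(x₁,x₂) = ρ(l₁x₁ + l₂x₂)` for a continuous `1`-periodic `ρ` with
`l₁a + l₂b ∈ ℤ³` a generator of `G(c)`; if `rank G(c) = 2` then `c ∈ c'ℤ³`, `c' ≠ 0`. -/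
theorem stmt_17
    (h : ℝ → ℝ → ℝ) (hcont : Continuous (Function.uncurry h))
    (a b c : Fin 3 → ℝ) (hab : LinearIndependent ℝ ![a, b]) (hc : c ≠ 0)
    (hca : c ⬝ᵥ a = 0) (hcb : c ⬝ᵥ b = 0)
    (d : Fin 3 → ℝ)
    (hper : ∀ (m : Fin 3 → ℤ) (x₁ x₂ : ℝ),
      h (x₁ + a ⬝ᵥ fun i => (m i : ℝ)) (x₂ + b ⬝ᵥ fun i => (m i : ℝ))
        = h x₁ x₂ + d ⬝ᵥ fun i => (m i : ℝ)) :
    ∃ (k₁ k₂ : ℝ) (ht : ℝ → ℝ → ℝ),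
      d = k₁ • a + k₂ • b ∧
      ht = (fun x₁ x₂ => h x₁ x₂ - k₁ * x₁ - k₂ * x₂) ∧
      (∀ (m : Fin 3 → ℤ) (x₁ x₂ : ℝ),
        ht (x₁ + a ⬝ᵥ fun i => (m i : ℝ)) (x₂ + b ⬝ᵥ fun i => (m i : ℝ)) = ht x₁ x₂) ∧
      -- rank G(c) = 0 case
      ((∀ m : Fin 3 → ℤ, (c ⬝ᵥ fun i => (m i : ℝ)) = 0 → m = 0) →
        ∃ C : ℝ, ∀ x₁ x₂ : ℝ, ht x₁ x₂ = C) ∧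
      -- rank G(c) = 1 case
      ((∃ m₀ : Fin 3 → ℤ, m₀ ≠ 0 ∧ (c ⬝ᵥ fun i => (m₀ i : ℝ)) = 0 ∧
          ∀ m : Fin 3 → ℤ, (c ⬝ᵥ fun i => (m i : ℝ)) = 0 → ∃ z : ℤ, m = z • m₀) →
        ∃ (l₁ l₂ : ℝ) (ρ : ℝ → ℝ) (m₀ : Fin 3 → ℤ),
          Continuous ρ ∧ (∀ t : ℝ, ρ (t + 1) = ρ t) ∧
          (∀ x₁ x₂ : ℝ, ht x₁ x₂ = ρ (l₁ * x₁ + l₂ * x₂)) ∧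
          (fun i => (m₀ i : ℝ)) = l₁ • a + l₂ • b ∧
          m₀ ≠ 0 ∧ (c ⬝ᵥ fun i => (m₀ i : ℝ)) = 0 ∧
          (∀ m : Fin 3 → ℤ, (c ⬝ᵥ fun i => (m i : ℝ)) = 0 → ∃ z : ℤ, m = z • m₀)) ∧
      -- rank G(c) = 2 case
      ((∃ m₁ m₂ : Fin 3 → ℤ, (c ⬝ᵥ fun i => (m₁ i : ℝ)) = 0 ∧
          (c ⬝ᵥ fun i => (m₂ i : ℝ)) = 0 ∧
          LinearIndependent ℝ ![fun i => (m₁ i : ℝ), fun i => (m₂ i : ℝ)]) →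
        ∃ c' : ℝ, c' ≠ 0 ∧ ∀ i, ∃ z : ℤ, c i = c' * z) := by
  classical
  have hcc : c ⬝ᵥ c ≠ 0 := fun h0 => hc (dotProduct_self_eq_zero.mp h0)
  -- every vector orthogonal to c is a combination of a and b
  have hspanc : ∀ u : Fin 3 → ℝ, c ⬝ᵥ u = 0 → ∃ p q : ℝ, u = p • a + q • b := by
    intro u hu
    obtain ⟨p, q, r, hpqr⟩ := span3 hab hca hcb hc u
    have hr : r = 0 := by
      have hc' := congrArg (fun z => c ⬝ᵥ z) hpqr
      simp only [dotProduct_add, dotProduct_smul, smul_eq_mul, hca, hcb,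
        mul_zero, zero_add, add_zero] at hc'
      rw [hu] at hc'
      rcases mul_eq_zero.mp hc'.symm with h0 | h0
      · exact h0
      · exact absurd h0 hcc
    exact ⟨p, q, by rw [hpqr, hr, zero_smul, add_zero]⟩
  -- kernel of T is spanned by c
  have hker : ∀ u : Fin 3 → ℝ, a ⬝ᵥ u = 0 → b ⬝ᵥ u = 0 → ∃ r : ℝ, u = r • c := by
    intro u hau hbu
    obtain ⟨p, q, r, hpqr⟩ := span3 hab hca hcb hc u
    have e1 : p * (a ⬝ᵥ a) + q * (a ⬝ᵥ b) = 0 := by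
      have h' := congrArg (fun z => a ⬝ᵥ z) hpqr
      simp only [dotProduct_add, dotProduct_smul, smul_eq_mul] at h'
      rw [hau, dotProduct_comm a c, hca] at h'
      linarith [h'.symm]
    have e2 : p * (a ⬝ᵥ b) + q * (b ⬝ᵥ b) = 0 := by
      have h' := congrArg (fun z => b ⬝ᵥ z) hpqr
      simp only [dotProduct_add, dotProduct_smul, smul_eq_mul] at h'
      rw [hbu, dotProduct_comm b c, hcb, dotProduct_comm b a] at h'
      linarith [h'.symm]
    obtain ⟨hp, hq⟩ := sys2 (by
      have := gram_ne_zero hab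
      convert this using 2) e1 e2
    exact ⟨r, by rw [hpqr, hp, hq, zero_smul, zero_smul, zero_add, zero_add]⟩
  have hdc : c ⬝ᵥ d = 0 := dc_zero h hcont a b c d hc hca hcb hper
  obtain ⟨k₁, k₂, hd⟩ := hspanc d hdc
  set ht : ℝ → ℝ → ℝ := fun x₁ x₂ => h x₁ x₂ - k₁ * x₁ - k₂ * x₂ with hht
  have hdm : ∀ m : Fin 3 → ℤ, (d ⬝ᵥ fun i => (m i : ℝ))
      = k₁ * (a ⬝ᵥ fun i => (m i : ℝ)) + k₂ * (b ⬝ᵥ fun i => (m i : ℝ)) := by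
    intro m
    rw [hd, add_dotProduct, smul_dotProduct, smul_dotProduct, smul_eq_mul, smul_eq_mul]
  have hper' : ∀ (m : Fin 3 → ℤ) (x₁ x₂ : ℝ),
      ht (x₁ + a ⬝ᵥ fun i => (m i : ℝ)) (x₂ + b ⬝ᵥ fun i => (m i : ℝ)) = ht x₁ x₂ := by
    intro m x₁ x₂
    simp only [hht]
    rw [hper m x₁ x₂, hdm m]
    ring
  set U : ℝ × ℝ → ℝ := fun p => ht p.1 p.2 with hU
  have hUcont : Continuous U := by
    have hU' : U = fun p : ℝ × ℝ => Function.uncurry h p - k₁ * p.1 - k₂ * p.2 := rfl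
    rw [hU']
    exact (hcont.sub (continuous_const.mul continuous_fst)).sub
      (continuous_const.mul continuous_snd)
  set H : AddSubgroup (ℝ × ℝ) :=
    { carrier := {v | ∀ p : ℝ × ℝ, U (p + v) = U p}
      zero_mem' := by intro p; rw [add_zero]
      add_mem' := by
        intro v w hv hw p
        rw [← add_assoc, hw, hv]
      neg_mem' := by
        intro v hv p
        have := hv (p + -v)
        rw [add_assoc, neg_add_cancel, add_zero] at this
        exact this.symm } with hH
  have hHmem : ∀ v : ℝ × ℝ, v ∈ H ↔ ∀ p : ℝ × ℝ, U (p + v) = U p := fun v => Iff.rfl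
  have hHcl : IsClosed (H : Set (ℝ × ℝ)) := by
    have : (H : Set (ℝ × ℝ)) = ⋂ p : ℝ × ℝ, {v | U (p + v) = U p} := by
      ext v
      simp only [Set.mem_iInter, Set.mem_setOf_eq]
      exact hHmem v
    rw [this]
    exact isClosed_iInter fun p =>
      isClosed_eq (hUcont.comp (continuous_const.add continuous_id)) continuous_const
  have hTmH : ∀ m : Fin 3 → ℤ,
      ((a ⬝ᵥ fun i => (m i : ℝ)), (b ⬝ᵥ fun i => (m i : ℝ))) ∈ H := by
    intro m p
    exact hper' m p.1 p.2
  refine ⟨k₁, k₂, ht, hd, rfl, hper', ?_, ?_, ?_⟩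
  · -- rank 0
    intro hr0
    have hc2 : c 2 ≠ 0 := by
      intro h0
      have h1 := hr0 ![0, 0, 1] (by
        simp [dotProduct, Fin.sum_univ_three, h0])
      have := congrFun h1 2
      simp at this
    set α : ℝ := -(c 0) / (c 2) with hα
    set β : ℝ := -(c 1) / (c 2) with hβ
    set f : ℝ × ℝ → ℝ × ℝ :=
      fun q => (q.1 * a 0 + q.2 * a 1, q.1 * b 0 + q.2 * b 1) with hf
    set H' : AddSubgroup (ℝ × ℝ) :=
      { carrier := {q | f q ∈ H}
        zero_mem' := by
          have : f 0 = 0 := by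
            simp [hf, Prod.ext_iff]
          simp only [Set.mem_setOf_eq, this]
          exact H.zero_mem
        add_mem' := by
          intro q q' hq hq'
          have : f (q + q') = f q + f q' := by
            simp only [hf, Prod.ext_iff, Prod.fst_add, Prod.snd_add]
            constructor <;> ring
          simp only [Set.mem_setOf_eq, this]
          exact H.add_mem hq hq'
        neg_mem' := by
          intro q hq
          have : f (-q) = -(f q) := by
            simp only [hf, Prod.ext_iff, Prod.fst_neg, Prod.snd_neg]
            constructor <;> ring
          simp only [Set.mem_setOf_eq, this]
          exact H.neg_mem hq } with hH'
    have hH'cl : IsClosed (H' : Set (ℝ × ℝ)) := by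
      have hfc : Continuous f := by
        apply Continuous.prodMk <;> fun_prop
      exact IsClosed.preimage hfc hHcl
    have hTe0 : ((a 0, b 0) : ℝ × ℝ) ∈ H := by
      have := hTmH ![1, 0, 0]
      simpa [dotProduct, Fin.sum_univ_three] using this
    have hTe1 : ((a 1, b 1) : ℝ × ℝ) ∈ H := by
      have := hTmH ![0, 1, 0]
      simpa [dotProduct, Fin.sum_univ_three] using this
    have hTe2 : ((a 2, b 2) : ℝ × ℝ) ∈ H := by
      have := hTmH ![0, 0, 1]
      simpa [dotProduct, Fin.sum_univ_three] using this
    have h1' : ((1:ℝ), (0:ℝ)) ∈ H' := by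
      show f (1, 0) ∈ H
      have : f (1, 0) = (a 0, b 0) := by
        simp [hf, Prod.ext_iff]
      rw [this]
      exact hTe0
    have h2' : ((0:ℝ), (1:ℝ)) ∈ H' := by
      show f (0, 1) ∈ H
      have : f (0, 1) = (a 1, b 1) := by
        simp [hf, Prod.ext_iff]
      rw [this]
      exact hTe1
    have h3' : ((α, β) : ℝ × ℝ) ∈ H' := by
      show f (α, β) ∈ H
      have hca' : c 0 * a 0 + c 1 * a 1 + c 2 * a 2 = 0 := by
        have := hca
        simpa [dotProduct, Fin.sum_univ_three] using this
      have hcb' : c 0 * b 0 + c 1 * b 1 + c 2 * b 2 = 0 := by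
        have := hcb
        simpa [dotProduct, Fin.sum_univ_three] using this
      have : f (α, β) = (a 2, b 2) := by
        rw [Prod.ext_iff]
        constructor
        · simp only [hf, hα, hβ]
          field_simp
          linear_combination -hca'
        · simp only [hf, hα, hβ]
          field_simp
          linear_combination -hcb'
      rw [this]
      exact hTe2
    have hrel' : ∀ p q r : ℤ, (p:ℝ) * α + (q:ℝ) * β + (r:ℝ) = 0 → p = 0 ∧ q = 0 ∧ r = 0 := by
      intro p q r hpqr
      have hdot : (c ⬝ᵥ fun i => (((![p, q, -r] : Fin 3 → ℤ) i : ℤ) : ℝ)) = 0 := by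
        simp only [dotProduct, Fin.sum_univ_three, Matrix.cons_val_zero,
          Matrix.cons_val_one, Matrix.head_cons, Matrix.cons_val_two, Matrix.tail_cons]
        push_cast
        rw [hα, hβ] at hpqr
        field_simp at hpqr
        have hgoal : c 2 * (c 0 * (p:ℝ) + c 1 * (q:ℝ) + c 2 * -(r:ℝ)) = 0 := by
          linear_combination -(c 2) * hpqr
        rcases mul_eq_zero.mp hgoal with h' | h'
        · exact absurd h' hc2
        · exact h'
      have := hr0 ![p, q, -r] hdot
      refine ⟨?_, ?_, ?_⟩
      · have := congrFun this 0; simpa using this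
      · have := congrFun this 1; simpa using this
      · have := congrFun this 2; simpa using neg_eq_zero.mp (by simpa using this)
    have hall := kron2 α β hrel' H' hH'cl h1' h2' h3'
    have hD : a 0 * b 1 - a 1 * b 0 ≠ 0 := by
      intro hD0
      by_cases h00 : a 0 = 0 ∧ b 0 = 0
      · obtain ⟨r, hr⟩ := hker ![1, 0, 0]
          (by simp [dotProduct, Fin.sum_univ_three, h00.1])
          (by simp [dotProduct, Fin.sum_univ_three, h00.2])
        have hr2 := congrFun hr 2
        simp only [Pi.smul_apply, smul_eq_mul] at hr2
        have hrz : r = 0 := by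
          rcases (by simpa using hr2.symm : r = 0 ∨ c 2 = 0) with h' | h'
          · exact h'
          · exact absurd h' hc2
        have hr0' := congrFun hr 0
        rw [hrz] at hr0'
        simp at hr0'
      · have hq0 : -(a 0 ^ 2 + b 0 ^ 2) ≠ 0 := by
          intro h'
          apply h00
          constructor <;> nlinarith
        obtain ⟨r, hr⟩ := hker ![a 1 * a 0 + b 1 * b 0, -(a 0 ^ 2 + b 0 ^ 2), 0]
          (by
            simp only [dotProduct, Fin.sum_univ_three, Matrix.cons_val_zero,
              Matrix.cons_val_one, Matrix.head_cons, Matrix.cons_val_two, Matrix.tail_cons]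
            linear_combination (b 0) * hD0)
          (by
            simp only [dotProduct, Fin.sum_univ_three, Matrix.cons_val_zero,
              Matrix.cons_val_one, Matrix.head_cons, Matrix.cons_val_two, Matrix.tail_cons]
            linear_combination (-(a 0)) * hD0)
        have hr2 := congrFun hr 2
        simp only [Pi.smul_apply, smul_eq_mul] at hr2
        have hrz : r = 0 := by
          rcases (by simpa using hr2.symm : r = 0 ∨ c 2 = 0) with h' | h'
          · exact h'
          · exact absurd h' hc2
        have hr1 := congrFun hr 1
        rw [hrz] at hr1
        simp only [Pi.smul_apply, smul_eq_mul, zero_mul] at hr1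
        apply hq0
        simpa using hr1
    refine ⟨ht 0 0, ?_⟩
    intro x y
    set pp : ℝ := (x * b 1 - y * a 1) / (a 0 * b 1 - a 1 * b 0) with hpp
    set qq : ℝ := (y * a 0 - x * b 0) / (a 0 * b 1 - a 1 * b 0) with hqq
    have hin : f (pp, qq) ∈ H := hall (pp, qq)
    have hfx : pp * a 0 + qq * a 1 = x := by
      rw [hpp, hqq]
      rw [div_mul_eq_mul_div, div_mul_eq_mul_div, ← add_div, div_eq_iff hD]
      ring
    have hfy : pp * b 0 + qq * b 1 = y := by
      rw [hpp, hqq]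
      rw [div_mul_eq_mul_div, div_mul_eq_mul_div, ← add_div, div_eq_iff hD]
      ring
    have hxyH : ((x, y) : ℝ × ℝ) ∈ H := by
      have : f (pp, qq) = (x, y) := Prod.ext_iff.mpr ⟨hfx, hfy⟩
      rwa [this] at hin
    have := hxyH ((0, 0) : ℝ × ℝ)
    simpa using this
  · -- rank 1
    rintro ⟨m₀, hm₀ne, hcm₀, hgen⟩
    have hm₀r0 : (fun i => ((m₀ i : ℤ) : ℝ)) ≠ (0 : Fin 3 → ℝ) := by
      intro h0
      apply hm₀ne
      funext i
      have := congrFun h0 i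
      simpa using this
    obtain ⟨l₁, l₂, hlam⟩ := hspanc (fun i => ((m₀ i : ℤ) : ℝ)) hcm₀
    have hpsiT : ∀ m : Fin 3 → ℤ,
        l₁ * (a ⬝ᵥ fun i => (m i : ℝ)) + l₂ * (b ⬝ᵥ fun i => (m i : ℝ))
          = ((m₀ ⬝ᵥ m : ℤ) : ℝ) := by
      intro m
      have h1 : ((fun i => ((m₀ i : ℤ) : ℝ)) ⬝ᵥ fun i => (m i : ℝ)) = ((m₀ ⬝ᵥ m : ℤ) : ℝ) := by
        simp only [dotProduct, Fin.sum_univ_three]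
        push_cast
        ring
      rw [← h1, hlam, add_dotProduct, smul_dotProduct, smul_dotProduct, smul_eq_mul, smul_eq_mul]
    have hlamne : ¬(l₁ = 0 ∧ l₂ = 0) := by
      rintro ⟨rfl, rfl⟩
      apply hm₀r0
      rw [hlam, zero_smul, zero_smul, add_zero]
    have hN0 : (0:ℝ) < l₁ ^ 2 + l₂ ^ 2 := by
      rcases not_and_or.mp hlamne with h' | h'
      · have h1 : 0 < l₁ ^ 2 := lt_of_le_of_ne (sq_nonneg l₁) (Ne.symm (pow_ne_zero 2 h'))
        nlinarith [sq_nonneg l₂]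
      · have h1 : 0 < l₂ ^ 2 := lt_of_le_of_ne (sq_nonneg l₂) (Ne.symm (pow_ne_zero 2 h'))
        nlinarith [sq_nonneg l₁]
    set N : ℝ := l₁ ^ 2 + l₂ ^ 2 with hN
    -- no nonzero integer vector is parallel to c
    have hnopar : ∀ (m : Fin 3 → ℤ) (t : ℝ), (fun i => ((m i : ℤ) : ℝ)) = t • c → m = 0 := by
      intro m t hmt
      by_contra hm0
      obtain ⟨w₁, w₂, hw₁, hw₂, hwli⟩ := perp2 m hm0
      have ht0 : t ≠ 0 := by
        intro h0
        rw [h0, zero_smul] at hmt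
        apply hm0
        funext i
        have := congrFun hmt i
        simpa using this
      have hcw : ∀ w : Fin 3 → ℤ, m ⬝ᵥ w = 0 → (c ⬝ᵥ fun i => (w i : ℝ)) = 0 := by
        intro w hw
        have h1 : ((fun i => ((m i : ℤ) : ℝ)) ⬝ᵥ fun i => (w i : ℝ)) = 0 := by
          have : ((fun i => ((m i : ℤ) : ℝ)) ⬝ᵥ fun i => (w i : ℝ)) = ((m ⬝ᵥ w : ℤ) : ℝ) := by
            simp only [dotProduct, Fin.sum_univ_three]
            push_cast
            ring
          rw [this, hw, Int.cast_zero]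
        rw [hmt, smul_dotProduct, smul_eq_mul] at h1
        rcases mul_eq_zero.mp h1 with h' | h'
        · exact absurd h' ht0
        · exact h'
      obtain ⟨z₁, hz₁⟩ := hgen w₁ (hcw w₁ hw₁)
      obtain ⟨z₂, hz₂⟩ := hgen w₂ (hcw w₂ hw₂)
      have hw₁r : (fun i => ((w₁ i : ℤ) : ℝ)) = (z₁ : ℝ) • (fun i => ((m₀ i : ℤ) : ℝ)) := by
        funext i
        rw [hz₁]
        simp only [Pi.smul_apply, smul_eq_mul]
        push_cast
        ring
      have hw₂r : (fun i => ((w₂ i : ℤ) : ℝ)) = (z₂ : ℝ) • (fun i => ((m₀ i : ℤ) : ℝ)) := by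
        funext i
        rw [hz₂]
        simp only [Pi.smul_apply, smul_eq_mul]
        push_cast
        ring
      have hcomb : (z₂ : ℝ) • (fun i => ((w₁ i : ℤ) : ℝ))
          + (-(z₁ : ℝ)) • (fun i => ((w₂ i : ℤ) : ℝ)) = 0 := by
        rw [hw₁r, hw₂r, smul_smul, smul_smul, ← add_smul]
        have : (z₂ : ℝ) * (z₁ : ℝ) + (-(z₁ : ℝ)) * (z₂ : ℝ) = 0 := by ring
        rw [this, zero_smul]
      have hzz := Fintype.linearIndependent_iff.mp hwli ![(z₂ : ℝ), -(z₁ : ℝ)] (by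
        simpa [Fin.sum_univ_two] using hcomb)
      have hz₁0 : z₁ = 0 := by
        have := hzz 1
        simp at this
        exact_mod_cast this
      have hw₁0 : (fun i => ((w₁ i : ℤ) : ℝ)) = (0 : Fin 3 → ℝ) := by
        rw [hw₁r, hz₁0]
        simp
      exact (hwli.ne_zero 0) (by simpa using hw₁0)
    -- the invariant line
    have hmemS : ∀ x y : ℝ, l₁ * x + l₂ * y = 0 →
        ((x, y) : ℝ × ℝ) = ((l₁ * y - l₂ * x) / N) • ((-l₂, l₁) : ℝ × ℝ) := by
      intro x y hxy
      rw [Prod.ext_iff]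
      constructor
      · show x = ((l₁ * y - l₂ * x) / N) * (-l₂)
        rw [div_mul_eq_mul_div, eq_div_iff (show N ≠ 0 from hN0.ne'), hN]
        linear_combination (l₁) * hxy
      · show y = ((l₁ * y - l₂ * x) / N) * l₁
        rw [div_mul_eq_mul_div, eq_div_iff (show N ≠ 0 from hN0.ne'), hN]
        linear_combination (l₂) * hxy
    have hline : ∀ t : ℝ, t • ((-l₂, l₁) : ℝ × ℝ) ∈ H := by
      set S₁ : AddSubgroup ℝ :=
        { carrier := {s : ℝ | s • ((-l₂, l₁) : ℝ × ℝ) ∈ H}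
          zero_mem' := by
            simp only [Set.mem_setOf_eq, zero_smul]
            exact H.zero_mem
          add_mem' := by
            intro s t hs ht'
            simp only [Set.mem_setOf_eq, add_smul]
            exact H.add_mem hs ht'
          neg_mem' := by
            intro s hs
            simp only [Set.mem_setOf_eq, neg_smul]
            exact H.neg_mem hs } with hS₁
      have hS₁cl : IsClosed (S₁ : Set ℝ) := by
        have : (S₁ : Set ℝ) = (fun s : ℝ => s • ((-l₂, l₁) : ℝ × ℝ)) ⁻¹' (H : Set (ℝ × ℝ)) := rfl
        rw [this]
        exact hHcl.preimage (continuous_id.smul continuous_const)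
      obtain ⟨w₁, w₂, hw₁, hw₂, hwli⟩ := perp2 m₀ hm₀ne
      have hsmem : ∀ w : Fin 3 → ℤ, m₀ ⬝ᵥ w = 0 →
          (((a ⬝ᵥ fun i => (w i : ℝ)), (b ⬝ᵥ fun i => (w i : ℝ))) : ℝ × ℝ)
            = ((l₁ * (b ⬝ᵥ fun i => (w i : ℝ)) - l₂ * (a ⬝ᵥ fun i => (w i : ℝ))) / N)
              • ((-l₂, l₁) : ℝ × ℝ)
          ∧ ((l₁ * (b ⬝ᵥ fun i => (w i : ℝ)) - l₂ * (a ⬝ᵥ fun i => (w i : ℝ))) / N) ∈ S₁ := by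
        intro w hw
        have hpsi : l₁ * (a ⬝ᵥ fun i => (w i : ℝ)) + l₂ * (b ⬝ᵥ fun i => (w i : ℝ)) = 0 := by
          rw [hpsiT w, hw, Int.cast_zero]
        have heq := hmemS _ _ hpsi
        refine ⟨heq, ?_⟩
        show _ • _ ∈ H
        rw [← heq]
        exact hTmH w
      rcases S₁.dense_or_cyclic with hdense | ⟨g, hg⟩
      · intro t
        have htS : t ∈ S₁ := by
          have h1 : closure (S₁ : Set ℝ) = Set.univ := hdense.closure_eq
          have h2 : closure (S₁ : Set ℝ) = (S₁ : Set ℝ) := hS₁cl.closure_eq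
          have : t ∈ (S₁ : Set ℝ) := by rw [← h2, h1]; trivial
          exact this
        exact htS
      · exfalso
        obtain ⟨he₁, hs₁⟩ := hsmem w₁ hw₁
        obtain ⟨he₂, hs₂⟩ := hsmem w₂ hw₂
        obtain ⟨p, hp⟩ := AddSubgroup.mem_closure_singleton.mp (hg ▸ hs₁)
        obtain ⟨q, hq⟩ := AddSubgroup.mem_closure_singleton.mp (hg ▸ hs₂)
        rw [zsmul_eq_mul] at hp hq
        set s₁ : ℝ := (l₁ * (b ⬝ᵥ fun i => (w₁ i : ℝ)) - l₂ * (a ⬝ᵥ fun i => (w₁ i : ℝ))) / N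
        set s₂ : ℝ := (l₁ * (b ⬝ᵥ fun i => (w₂ i : ℝ)) - l₂ * (a ⬝ᵥ fun i => (w₂ i : ℝ))) / N
        -- first: if s vanishes then w vanishes, contradiction
        have hTw0 : ∀ w : Fin 3 → ℤ, (a ⬝ᵥ fun i => (w i : ℝ)) = 0 →
            (b ⬝ᵥ fun i => (w i : ℝ)) = 0 → w = 0 := by
          intro w hwa hwb
          obtain ⟨r, hr⟩ := hker _ hwa hwb
          exact hnopar w r hr
        -- md := q • w₁ - p • w₂ is in the kernel
        have hcastmd : (fun i => (((q • w₁ - p • w₂) i : ℤ) : ℝ))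
            = fun i => (q : ℝ) * ((w₁ i : ℤ) : ℝ) - (p : ℝ) * ((w₂ i : ℤ) : ℝ) := by
          funext i
          simp only [Pi.sub_apply, Pi.smul_apply, smul_eq_mul]
          push_cast
          ring
        have hamd : (a ⬝ᵥ fun i => (((q • w₁ - p • w₂) i : ℤ) : ℝ)) = 0 := by
          rw [hcastmd]
          have hexp : (a ⬝ᵥ fun i => (q : ℝ) * ((w₁ i : ℤ) : ℝ) - (p : ℝ) * ((w₂ i : ℤ) : ℝ))
              = (q : ℝ) * (a ⬝ᵥ fun i => (w₁ i : ℝ)) - (p : ℝ) * (a ⬝ᵥ fun i => (w₂ i : ℝ)) := by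
            simp only [dotProduct, Fin.sum_univ_three]
            ring
          rw [hexp]
          have h1 : (a ⬝ᵥ fun i => (w₁ i : ℝ)) = s₁ * (-l₂) := congrArg Prod.fst he₁
          have h2 : (a ⬝ᵥ fun i => (w₂ i : ℝ)) = s₂ * (-l₂) := congrArg Prod.fst he₂
          rw [h1, h2, ← hp, ← hq]
          ring
        have hbmd : (b ⬝ᵥ fun i => (((q • w₁ - p • w₂) i : ℤ) : ℝ)) = 0 := by
          rw [hcastmd]
          have hexp : (b ⬝ᵥ fun i => (q : ℝ) * ((w₁ i : ℤ) : ℝ) - (p : ℝ) * ((w₂ i : ℤ) : ℝ))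
              = (q : ℝ) * (b ⬝ᵥ fun i => (w₁ i : ℝ)) - (p : ℝ) * (b ⬝ᵥ fun i => (w₂ i : ℝ)) := by
            simp only [dotProduct, Fin.sum_univ_three]
            ring
          rw [hexp]
          have h1 : (b ⬝ᵥ fun i => (w₁ i : ℝ)) = s₁ * l₁ := congrArg Prod.snd he₁
          have h2 : (b ⬝ᵥ fun i => (w₂ i : ℝ)) = s₂ * l₁ := congrArg Prod.snd he₂
          rw [h1, h2, ← hp, ← hq]
          ring
        have hmd0 : q • w₁ - p • w₂ = 0 := hTw0 _ hamd hbmd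
        -- independence contradiction
        have hcomb : (q : ℝ) • (fun i => ((w₁ i : ℤ) : ℝ))
            + (-(p : ℝ)) • (fun i => ((w₂ i : ℤ) : ℝ)) = 0 := by
          funext i
          have h' : q * w₁ i - p * w₂ i = 0 := by
            have hh := congrFun hmd0 i
            simpa [smul_eq_mul] using hh
          have h'' : ((q * w₁ i - p * w₂ i : ℤ) : ℝ) = 0 := by
            exact_mod_cast congrArg (fun z : ℤ => (z : ℝ)) h'
          push_cast at h''
          simp only [Pi.add_apply, Pi.smul_apply, smul_eq_mul, Pi.zero_apply]
          linarith [h'']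
        have hzz := Fintype.linearIndependent_iff.mp hwli ![(q : ℝ), -(p : ℝ)] (by
          simpa [Fin.sum_univ_two] using hcomb)
        have hqz : q = 0 := by
          have := hzz 0
          simp at this
          exact_mod_cast this
        have hpz : p = 0 := by
          have := hzz 1
          simp at this
          exact_mod_cast this
        have hs₁0 : s₁ = 0 := by rw [← hp, hpz]; simp
        have hw₁a : (a ⬝ᵥ fun i => (w₁ i : ℝ)) = 0 := by
          have h1 : (a ⬝ᵥ fun i => (w₁ i : ℝ)) = s₁ * (-l₂) := congrArg Prod.fst he₁
          rw [h1, hs₁0, zero_mul]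
        have hw₁b : (b ⬝ᵥ fun i => (w₁ i : ℝ)) = 0 := by
          have h1 : (b ⬝ᵥ fun i => (w₁ i : ℝ)) = s₁ * l₁ := congrArg Prod.snd he₁
          rw [h1, hs₁0, zero_mul]
        have hw₁00 : w₁ = 0 := hTw0 _ hw₁a hw₁b
        apply hwli.ne_zero 0
        funext i
        simp [hw₁00]
    -- a vector with m₀ ⬝ᵥ m₁ = 1
    obtain ⟨m₁, hm₁⟩ : ∃ m₁ : Fin 3 → ℤ, m₀ ⬝ᵥ m₁ = 1 := by
      set dg : ℕ := Int.gcd (Int.gcd (m₀ 0) (m₀ 1)) (m₀ 2) with hdg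
      have hgg : Int.gcd ((Int.gcd (m₀ 0) (m₀ 1) : ℤ)) (m₀ 2) = dg := by
        simp [hdg, Int.gcd]
      have hA : (dg : ℤ) ∣ (Int.gcd (m₀ 0) (m₀ 1) : ℤ) := by
        have h' := Int.gcd_dvd_left (a := ((Int.gcd (m₀ 0) (m₀ 1) : ℤ))) (b := m₀ 2)
        rwa [hgg] at h'
      have hB : (dg : ℤ) ∣ m₀ 2 := by
        have h' := Int.gcd_dvd_right (a := ((Int.gcd (m₀ 0) (m₀ 1) : ℤ))) (b := m₀ 2)
        rwa [hgg] at h'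
      have hdvd : ∀ i, (dg : ℤ) ∣ m₀ i := by
        intro i
        fin_cases i
        · exact hA.trans (Int.gcd_dvd_left (a := m₀ 0) (b := m₀ 1))
        · exact hA.trans (Int.gcd_dvd_right (a := m₀ 0) (b := m₀ 1))
        · exact hB
      have hdgne : (dg : ℤ) ≠ 0 := by
        intro h0
        apply hm₀ne
        have h1 : Int.gcd (Int.gcd (m₀ 0) (m₀ 1)) (m₀ 2) = 0 := by exact_mod_cast h0
        rw [Int.gcd_eq_zero_iff] at h1
        obtain ⟨h2, h3⟩ := h1
        have h2' : Int.gcd (m₀ 0) (m₀ 1) = 0 := by exact_mod_cast h2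
        rw [Int.gcd_eq_zero_iff] at h2'
        funext i
        fin_cases i
        · exact h2'.1
        · exact h2'.2
        · exact h3
      set m' : Fin 3 → ℤ := fun i => m₀ i / dg with hm'
      have hm'eq : ∀ i, m₀ i = dg * m' i := by
        intro i
        rw [hm']
        exact (Int.mul_ediv_cancel' (hdvd i)).symm
      have hcm' : (c ⬝ᵥ fun i => (m' i : ℝ)) = 0 := by
        have hexp : (c ⬝ᵥ fun i => (m₀ i : ℝ)) = (dg : ℝ) * (c ⬝ᵥ fun i => (m' i : ℝ)) := by
          simp only [dotProduct, Fin.sum_univ_three]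
          rw [hm'eq 0, hm'eq 1, hm'eq 2]
          push_cast
          ring
        rw [hcm₀] at hexp
        rcases mul_eq_zero.mp hexp.symm with h' | h'
        · exact absurd h' (by exact_mod_cast hdgne)
        · exact h'
      obtain ⟨z, hz⟩ := hgen m' hcm'
      obtain ⟨i₀, hi₀⟩ : ∃ i, m₀ i ≠ 0 := by
        by_contra hno
        push_neg at hno
        exact hm₀ne (funext hno)
      have hz' : m' i₀ = z * m₀ i₀ := by
        have := congrFun hz i₀
        simpa [zsmul_eq_mul] using this
      have hdz : (dg : ℤ) * z = 1 := by
        have h1 : m₀ i₀ = (dg : ℤ) * (z * m₀ i₀) := by rw [← hz']; exact hm'eq i₀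
        have h2 : ((dg : ℤ) * z - 1) * m₀ i₀ = 0 := by linear_combination -h1
        rcases mul_eq_zero.mp h2 with h' | h'
        · linarith [h']
        · exact absurd h' hi₀
      have hdg1 : dg = 1 := by
        have h1 : (dg : ℤ) = 1 ∨ (dg : ℤ) = -1 :=
          Int.isUnit_iff.mp (IsUnit.of_mul_eq_one _ hdz)
        rcases h1 with h' | h'
        · exact_mod_cast h'
        · exfalso
          have : (0 : ℤ) ≤ dg := Int.natCast_nonneg dg
          omega
      obtain ⟨m₁, hm₁⟩ := bezout3 m₀
      rw [← hdg] at hm₁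
      rw [hdg1] at hm₁
      exact ⟨m₁, by exact_mod_cast hm₁⟩
    -- define ρ and conclude
    refine ⟨l₁, l₂, fun t => U ((t * (l₁ / N), t * (l₂ / N)) : ℝ × ℝ), m₀, ?_, ?_, ?_, hlam, hm₀ne, hcm₀, hgen⟩
    · exact hUcont.comp (by fun_prop)
    · -- periodicity
      intro t
      show U (((t + 1) * (l₁ / N), (t + 1) * (l₂ / N)) : ℝ × ℝ)
          = U ((t * (l₁ / N), t * (l₂ / N)) : ℝ × ℝ)
      have hpsiTm1 : l₁ * (a ⬝ᵥ fun i => (m₁ i : ℝ)) + l₂ * (b ⬝ᵥ fun i => (m₁ i : ℝ)) = 1 := by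
        rw [hpsiT m₁, hm₁, Int.cast_one]
      have hd0 : l₁ * (l₁ / N - (a ⬝ᵥ fun i => (m₁ i : ℝ)))
          + l₂ * (l₂ / N - (b ⬝ᵥ fun i => (m₁ i : ℝ))) = 0 := by
        have hNN : l₁ * (l₁ / N) + l₂ * (l₂ / N) = 1 := by
          rw [mul_div_assoc', mul_div_assoc', ← add_div, div_eq_one_iff_eq (show N ≠ 0 from hN0.ne'), hN]
          ring
        linear_combination hNN - hpsiTm1
      have heq := hmemS _ _ hd0
      have hmem1 : ((l₁ / N - (a ⬝ᵥ fun i => (m₁ i : ℝ)),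
          l₂ / N - (b ⬝ᵥ fun i => (m₁ i : ℝ))) : ℝ × ℝ) ∈ H := by
        rw [heq]
        exact hline _
      have step1 : U (((t + 1) * (l₁ / N), (t + 1) * (l₂ / N)) : ℝ × ℝ)
          = U ((t * (l₁ / N) + (a ⬝ᵥ fun i => (m₁ i : ℝ)),
              t * (l₂ / N) + (b ⬝ᵥ fun i => (m₁ i : ℝ))) : ℝ × ℝ) := by
        have harg : (((t + 1) * (l₁ / N), (t + 1) * (l₂ / N)) : ℝ × ℝ)
            = ((t * (l₁ / N) + (a ⬝ᵥ fun i => (m₁ i : ℝ)),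
              t * (l₂ / N) + (b ⬝ᵥ fun i => (m₁ i : ℝ))) : ℝ × ℝ)
              + ((l₁ / N - (a ⬝ᵥ fun i => (m₁ i : ℝ)),
                l₂ / N - (b ⬝ᵥ fun i => (m₁ i : ℝ))) : ℝ × ℝ) := by
          rw [Prod.ext_iff]
          constructor
          · show (t + 1) * (l₁ / N) = t * (l₁ / N) + (a ⬝ᵥ fun i => (m₁ i : ℝ))
              + (l₁ / N - (a ⬝ᵥ fun i => (m₁ i : ℝ)))
            ring
          · show (t + 1) * (l₂ / N) = t * (l₂ / N) + (b ⬝ᵥ fun i => (m₁ i : ℝ))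
              + (l₂ / N - (b ⬝ᵥ fun i => (m₁ i : ℝ)))
            ring
        rw [harg]
        exact hmem1 _
      have step2 : U ((t * (l₁ / N) + (a ⬝ᵥ fun i => (m₁ i : ℝ)),
          t * (l₂ / N) + (b ⬝ᵥ fun i => (m₁ i : ℝ))) : ℝ × ℝ)
          = U ((t * (l₁ / N), t * (l₂ / N)) : ℝ × ℝ) := by
        have := hTmH m₁ ((t * (l₁ / N), t * (l₂ / N)) : ℝ × ℝ)
        simpa [Prod.mk_add_mk] using this
      rw [step1, step2]
    · -- factorization
      intro x y
      have hNN : l₁ * (l₁ / N) + l₂ * (l₂ / N) = 1 := by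
        rw [mul_div_assoc', mul_div_assoc', ← add_div, div_eq_one_iff_eq (show N ≠ 0 from hN0.ne'), hN]
        ring
      have hd0 : l₁ * (x - (l₁ * x + l₂ * y) * (l₁ / N))
          + l₂ * (y - (l₁ * x + l₂ * y) * (l₂ / N)) = 0 := by
        linear_combination (-(l₁ * x + l₂ * y)) * hNN
      have heq := hmemS _ _ hd0
      have hmem1 : ((x - (l₁ * x + l₂ * y) * (l₁ / N),
          y - (l₁ * x + l₂ * y) * (l₂ / N)) : ℝ × ℝ) ∈ H := by
        rw [heq]
        exact hline _
      have harg : ((x, y) : ℝ × ℝ)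
          = (((l₁ * x + l₂ * y) * (l₁ / N), (l₁ * x + l₂ * y) * (l₂ / N)) : ℝ × ℝ)
            + ((x - (l₁ * x + l₂ * y) * (l₁ / N),
              y - (l₁ * x + l₂ * y) * (l₂ / N)) : ℝ × ℝ) := by
        rw [Prod.ext_iff]
        constructor
        · show x = (l₁ * x + l₂ * y) * (l₁ / N) + (x - (l₁ * x + l₂ * y) * (l₁ / N))
          ring
        · show y = (l₁ * x + l₂ * y) * (l₂ / N) + (y - (l₁ * x + l₂ * y) * (l₂ / N))
          ring
      show ht x y = U (((l₁ * x + l₂ * y) * (l₁ / N), (l₁ * x + l₂ * y) * (l₂ / N)) : ℝ × ℝ)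
      have : ht x y = U ((x, y) : ℝ × ℝ) := rfl
      rw [this, harg]
      exact hmem1 _
  · -- rank 2
    rintro ⟨m₁, m₂, hcm₁, hcm₂, hli⟩
    set u₁ : Fin 3 → ℝ := fun i => (m₁ i : ℝ) with hu₁
    set u₂ : Fin 3 → ℝ := fun i => (m₂ i : ℝ) with hu₂
    set n : Fin 3 → ℤ := ![m₁ 1 * m₂ 2 - m₁ 2 * m₂ 1, m₁ 2 * m₂ 0 - m₁ 0 * m₂ 2,
      m₁ 0 * m₂ 1 - m₁ 1 * m₂ 0] with hn
    set nr : Fin 3 → ℝ := fun i => (n i : ℝ) with hnr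
    have hgram := gram_ne_zero hli
    have hnn : nr ⬝ᵥ nr = (u₁ ⬝ᵥ u₁) * (u₂ ⬝ᵥ u₂) - (u₁ ⬝ᵥ u₂) ^ 2 := by
      simp only [hnr, hn, hu₁, hu₂, dotProduct, Fin.sum_univ_three,
        Matrix.cons_val_zero, Matrix.cons_val_one, Matrix.head_cons,
        Matrix.cons_val_two, Matrix.tail_cons]
      push_cast
      ring
    have hd1 : u₁ ⬝ᵥ nr = 0 := by
      simp only [hnr, hn, hu₁, hu₂, dotProduct, Fin.sum_univ_three,
        Matrix.cons_val_zero, Matrix.cons_val_one, Matrix.head_cons,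
        Matrix.cons_val_two, Matrix.tail_cons]
      push_cast
      ring
    have hd2 : u₂ ⬝ᵥ nr = 0 := by
      simp only [hnr, hn, hu₁, hu₂, dotProduct, Fin.sum_univ_three,
        Matrix.cons_val_zero, Matrix.cons_val_one, Matrix.head_cons,
        Matrix.cons_val_two, Matrix.tail_cons]
      push_cast
      ring
    have hnr0 : nr ≠ 0 := by
      intro h0
      apply hgram
      have : nr ⬝ᵥ nr = 0 := by rw [h0]; simp
      rw [hnn] at this
      linarith
    obtain ⟨s, t, r, hstr⟩ := span3 hli hcm₁ hcm₂ hc nr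
    have e1 : s * (u₁ ⬝ᵥ u₁) + t * (u₁ ⬝ᵥ u₂) = 0 := by
      have h' := congrArg (fun z => u₁ ⬝ᵥ z) hstr
      simp only [dotProduct_add, dotProduct_smul, smul_eq_mul] at h'
      rw [hd1, dotProduct_comm u₁ c, hcm₁] at h'
      linarith [h'.symm]
    have e2 : s * (u₁ ⬝ᵥ u₂) + t * (u₂ ⬝ᵥ u₂) = 0 := by
      have h' := congrArg (fun z => u₂ ⬝ᵥ z) hstr
      simp only [dotProduct_add, dotProduct_smul, smul_eq_mul] at h'
      rw [hd2, dotProduct_comm u₂ c, hcm₂, dotProduct_comm u₂ u₁] at h'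
      linarith [h'.symm]
    obtain ⟨hs, hts⟩ := sys2 hgram e1 e2
    have hnrc : nr = r • c := by rw [hstr, hs, hts, zero_smul, zero_smul, zero_add, zero_add]
    have hr0 : r ≠ 0 := by
      intro h0
      exact hnr0 (by rw [hnrc, h0, zero_smul])
    refine ⟨r⁻¹, inv_ne_zero hr0, fun i => ⟨n i, ?_⟩⟩
    have h' := congrFun hnrc i
    simp only [Pi.smul_apply, smul_eq_mul, hnr] at h'
    field_simp
    linear_combination -h'

end
end
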